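/- arXiv:2503.20329 — 7 statements merged into one kernel-verified Lean document; each statement's English description precedes it below -/
import Mathlib

section
/- Let G be a connected finite simple graph and let A be a minimal edge cut of G with |A| = 2. Let G_1 and G_2 be the two connected components of G − A. Then y_G = y_{G_1} + y_{G_2} − 1. -/
open SimpleGraph

/-- The number of connected components of a graph. -/
noncomputable def numComp {V : Type*} (G : SimpleGraph V) : ℕ :=
  Nat.card G.ConnectedComponent

/-- `y_G(A) = 2 c(G - A) - |A| - 1`. -/
noncomputable def yVal {V : Type*} (G : SimpleGraph V) (A : Set (Sym2 V)) : ℤ :=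
  2 * (numComp (G.deleteEdges A) : ℤ) - (A.ncard : ℤ) - 1

/-- `y_G = max_{A ⊆ E(G)} y_G(A)`. -/
noncomputable def yMax {V : Type*} (G : SimpleGraph V) : ℤ :=
  sSup { y : ℤ | ∃ A ⊆ G.edgeSet, yVal G A = y }

section Aux

open scoped Classical

variable {V : Type*}

lemma reach_trans' {H H' : SimpleGraph V}
    (hadj : ∀ u v, H'.Adj u v → H.Reachable u v) {x y : V}
    (h : H'.Reachable x y) : H.Reachable x y := by
  obtain ⟨p⟩ := h
  induction p with
  | nil => exact Reachable.refl _
  | cons h p ih => exact (hadj _ _ h).trans ih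

variable (H : SimpleGraph V) (S : Set V)

/-- Map a vertex to the connected component of its side. -/
noncomputable def sideFun (v : V) :
    (H.induce S).ConnectedComponent ⊕ (H.induce Sᶜ).ConnectedComponent :=
  if h : v ∈ S then Sum.inl ((H.induce S).connectedComponentMk ⟨v, h⟩)
  else Sum.inr ((H.induce Sᶜ).connectedComponentMk ⟨v, h⟩)

lemma sideFun_const (hcross : ∀ u v, H.Adj u v → (u ∈ S ↔ v ∈ S))
    {u v : V} (h : H.Reachable u v) : sideFun H S u = sideFun H S v := by
  have step : ∀ u v, H.Adj u v → sideFun H S u = sideFun H S v := by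
    intro u v huv
    by_cases hu : u ∈ S
    · have hv : v ∈ S := (hcross u v huv).mp hu
      rw [sideFun, sideFun, dif_pos hu, dif_pos hv]
      exact congrArg _ (ConnectedComponent.sound (Adj.reachable (by exact huv)))
    · have hv : v ∉ S := fun hv => hu ((hcross u v huv).mpr hv)
      rw [sideFun, sideFun, dif_neg hu, dif_neg hv]
      exact congrArg _ (ConnectedComponent.sound (Adj.reachable (by exact huv)))
  obtain ⟨p⟩ := h
  induction p with
  | nil => rfl
  | cons h p ih => exact (step _ _ h).trans ih

/-- Components of a graph with no edges crossing `S` split as a sum. -/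
noncomputable def compEquiv (hcross : ∀ u v, H.Adj u v → (u ∈ S ↔ v ∈ S)) :
    H.ConnectedComponent ≃
      (H.induce S).ConnectedComponent ⊕ (H.induce Sᶜ).ConnectedComponent where
  toFun := Quot.lift (sideFun H S) (fun _ _ h => sideFun_const H S hcross h)
  invFun := Sum.elim
    (ConnectedComponent.map ⟨Subtype.val, fun h => h⟩)
    (ConnectedComponent.map ⟨Subtype.val, fun h => h⟩)
  left_inv := by
    apply ConnectedComponent.ind
    intro v
    show Sum.elim _ _ (sideFun H S v) = _
    by_cases h : v ∈ S
    · rw [sideFun, dif_pos h]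
      exact ConnectedComponent.map_mk _ _
    · rw [sideFun, dif_neg h]
      exact ConnectedComponent.map_mk _ _
  right_inv := by
    rintro (c | c)
    · refine ConnectedComponent.ind (fun x => ?_) c
      simp only [Sum.elim_inl, ConnectedComponent.map_mk]
      exact dif_pos x.2
    · refine ConnectedComponent.ind (fun x => ?_) c
      simp only [Sum.elim_inr, ConnectedComponent.map_mk]
      exact dif_neg x.2

lemma numComp_eq_add [Finite V] (hcross : ∀ u v, H.Adj u v → (u ∈ S ↔ v ∈ S)) :
    numComp H = numComp (H.induce S) + numComp (H.induce Sᶜ) := by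
  rw [numComp, Nat.card_congr (compEquiv H S hcross), Nat.card_sum]; rfl

lemma numComp_lt [Finite V] {H H' : SimpleGraph V} (hle : H ≤ H') {u v : V}
    (hr' : H'.Reachable u v) (hr : ¬ H.Reachable u v) : numComp H' < numComp H := by
  set φ := ConnectedComponent.map (Hom.ofLE hle)
  have hsurj : Function.Surjective φ := by
    intro c
    refine ConnectedComponent.ind (fun w => ⟨H.connectedComponentMk w, ?_⟩) c
    simp only [φ, ConnectedComponent.map_mk]
    rfl
  have hninj : ¬ Function.Injective φ := by
    intro hinj
    apply hr
    apply ConnectedComponent.exact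
    apply hinj
    simp only [φ, ConnectedComponent.map_mk]
    exact ConnectedComponent.sound hr'
  have hle' : numComp H' ≤ numComp H := Nat.card_le_card_of_surjective φ hsurj
  rcases lt_or_eq_of_le hle' with h | h
  · exact h
  · exact absurd ((Nat.bijective_iff_surjective_and_card φ).mpr ⟨hsurj, h.symm⟩).injective hninj

lemma mem_range_sym2map {S : Set V} {e : Sym2 V} :
    e ∈ Set.range (Sym2.map (Subtype.val : S → V)) ↔ ∀ x ∈ e, x ∈ S := by
  constructor
  · rintro ⟨e', rfl⟩
    refine Sym2.inductionOn e' (fun a b => ?_)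
    intro x hx
    rw [Sym2.map_pair_eq, Sym2.mem_iff] at hx
    rcases hx with rfl | rfl
    · exact a.2
    · exact b.2
  · refine Sym2.inductionOn e (fun u v h => ?_)
    exact ⟨s(⟨u, h u (Sym2.mem_mk_left u v)⟩, ⟨v, h v (Sym2.mem_mk_right u v)⟩),
      Sym2.map_pair_eq _ _ _⟩

lemma ySet_finite [Finite V] (G : SimpleGraph V) :
    { y : ℤ | ∃ A ⊆ G.edgeSet, yVal G A = y }.Finite :=
  (Set.finite_range (yVal G)).subset (by rintro y ⟨B, -, rfl⟩; exact ⟨B, rfl⟩)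

lemma le_yMax [Finite V] {G : SimpleGraph V} {B : Set (Sym2 V)} (hB : B ⊆ G.edgeSet) :
    yVal G B ≤ yMax G :=
  le_csSup (ySet_finite G).bddAbove ⟨B, hB, rfl⟩

lemma yMax_mem [Finite V] (G : SimpleGraph V) :
    ∃ B ⊆ G.edgeSet, yVal G B = yMax G := by
  have h : yMax G ∈ { y : ℤ | ∃ A ⊆ G.edgeSet, yVal G A = y } :=
    Set.Nonempty.csSup_mem ⟨yVal G ∅, ∅, Set.empty_subset _, rfl⟩ (ySet_finite G)
  obtain ⟨B, hB, hBv⟩ := h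
  exact ⟨B, hB, hBv⟩

end Aux

/-- If `A` is a minimal edge cut of a connected finite simple graph `G` with `|A| = 2`,
and `G₁`, `G₂` are the two connected components of `G - A`, then
`y_G = y_{G₁} + y_{G₂} - 1`. -/
theorem yMax_eq_add_sub_one_of_minimal_edgeCut_card_two {V : Type*} [Finite V]
    (G : SimpleGraph V) (hG : G.Connected)
    (A : Set (Sym2 V)) (hA : A ⊆ G.edgeSet)
    (hdisc : ¬ (G.deleteEdges A).Connected)
    (hmin : ∀ A' ⊂ A, (G.deleteEdges A').Connected)
    (hcard : A.ncard = 2)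
    (c₁ c₂ : (G.deleteEdges A).ConnectedComponent) (hne : c₁ ≠ c₂)
    (htwo : ∀ c : (G.deleteEdges A).ConnectedComponent, c = c₁ ∨ c = c₂) :
    yMax G = yMax ((G.deleteEdges A).induce c₁.supp)
      + yMax ((G.deleteEdges A).induce c₂.supp) - 1 := by
  classical
  set S := c₁.supp with hSdef
  have hS2 : c₂.supp = Sᶜ := by
    ext v
    simp only [ConnectedComponent.mem_supp_iff, Set.mem_compl_iff, hSdef]
    constructor
    · intro h hc
      exact hne (hc.symm.trans h)
    · intro h
      rcases htwo ((G.deleteEdges A).connectedComponentMk v) with h1 | h1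
      · exact absurd ((ConnectedComponent.mem_supp_iff _ _).mpr h1) h
      · exact h1
  rw [hS2]
  -- no edge of A joins two vertices in the same component of (G.deleteEdges A)
  have hAreach : ∀ u v, s(u, v) ∈ A → ¬ (G.deleteEdges A).Reachable u v := by
    intro u v haA hreach
    apply hdisc
    have hconn' : (G.deleteEdges (A \ {s(u, v)})).Connected :=
      hmin _ (Set.sdiff_singleton_ssubset.mpr haA)
    haveI : Nonempty V := hG.nonempty
    refine ⟨fun x y => ?_⟩
    refine reach_trans' (H' := G.deleteEdges (A \ {s(u, v)})) ?_ (hconn'.preconnected x y)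
    intro a b hab
    rw [deleteEdges_adj] at hab
    by_cases hmem : s(a, b) ∈ A
    · have heq : s(a, b) = s(u, v) := by
        by_contra hne'
        exact hab.2 ⟨hmem, hne'⟩
      rw [Sym2.eq_iff] at heq
      rcases heq with ⟨rfl, rfl⟩ | ⟨rfl, rfl⟩
      · exact hreach
      · exact hreach.symm
    · exact Adj.reachable (by rw [deleteEdges_adj]; exact ⟨hab.1, hmem⟩)
  -- edges of A are not contained in S nor in Sᶜ
  have hside : ∀ v, v ∉ S → (G.deleteEdges A).connectedComponentMk v = c₂ := by
    intro v hv
    rcases htwo ((G.deleteEdges A).connectedComponentMk v) with h1 | h1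
    · exact absurd ((ConnectedComponent.mem_supp_iff _ _).mpr h1) hv
    · exact h1
  have hmemS : ∀ v, v ∈ S ↔ (G.deleteEdges A).connectedComponentMk v = c₁ := by
    intro v; exact ConnectedComponent.mem_supp_iff _ _
  have hArange1 : ∀ e ∈ A, e ∉ Set.range (Sym2.map (Subtype.val : S → V)) := by
    intro e he hr
    rw [mem_range_sym2map] at hr
    revert he hr
    refine Sym2.inductionOn e (fun u v he hr => ?_)
    have hu := (hmemS u).mp (hr u (Sym2.mem_mk_left u v))
    have hv := (hmemS v).mp (hr v (Sym2.mem_mk_right u v))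
    exact hAreach u v he (ConnectedComponent.exact (hu.trans hv.symm))
  have hArange2 : ∀ e ∈ A, e ∉ Set.range (Sym2.map (Subtype.val : ↥(Sᶜ) → V)) := by
    intro e he hr
    rw [mem_range_sym2map] at hr
    revert he hr
    refine Sym2.inductionOn e (fun u v he hr => ?_)
    have hu := hside u (hr u (Sym2.mem_mk_left u v))
    have hv := hside v (hr v (Sym2.mem_mk_right u v))
    exact hAreach u v he (ConnectedComponent.exact (hu.trans hv.symm))
  -- edges not in A don't cross S
  have hnoncross : ∀ (B : Set (Sym2 V)), A ⊆ B → ∀ u v,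
      (G.deleteEdges B).Adj u v → (u ∈ S ↔ v ∈ S) := by
    intro B hAB u v huv
    rw [deleteEdges_adj] at huv
    have hH : (G.deleteEdges A).Adj u v := by
      rw [deleteEdges_adj]
      exact ⟨huv.1, fun h => huv.2 (hAB h)⟩
    have heq := ConnectedComponent.connectedComponentMk_eq_of_adj hH
    rw [hmemS, hmemS, heq]
  set f₁ : Sym2 ↥S → Sym2 V := Sym2.map Subtype.val with hf₁
  set f₂ : Sym2 ↥(Sᶜ) → Sym2 V := Sym2.map Subtype.val with hf₂
  have hinj₁ : Function.Injective f₁ := Sym2.map.injective Subtype.val_injective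
  have hinj₂ : Function.Injective f₂ := Sym2.map.injective Subtype.val_injective
  -- preimages are edge sets
  have hedge₁ : ∀ B ⊆ G.edgeSet, A ⊆ B → f₁ ⁻¹' B ⊆ ((G.deleteEdges A).induce S).edgeSet := by
    intro B hBE hAB e he
    rw [Set.mem_preimage] at he
    revert he
    refine Sym2.inductionOn e (fun x y he => ?_)
    rw [hf₁, Sym2.map_pair_eq] at he
    rw [mem_edgeSet]
    show (G.deleteEdges A).Adj ↑x ↑y
    rw [deleteEdges_adj]
    exact ⟨(mem_edgeSet G).mp (hBE he), fun h => hArange1 _ h ⟨s(x, y), rfl⟩⟩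
  have hedge₂ : ∀ B ⊆ G.edgeSet, A ⊆ B → f₂ ⁻¹' B ⊆ ((G.deleteEdges A).induce Sᶜ).edgeSet := by
    intro B hBE hAB e he
    rw [Set.mem_preimage] at he
    revert he
    refine Sym2.inductionOn e (fun x y he => ?_)
    rw [hf₂, Sym2.map_pair_eq] at he
    rw [mem_edgeSet]
    show (G.deleteEdges A).Adj ↑x ↑y
    rw [deleteEdges_adj]
    exact ⟨(mem_edgeSet G).mp (hBE he), fun h => hArange2 _ h ⟨s(x, y), rfl⟩⟩
  -- induced graphs of the deletion
  have hgraph₁ : ∀ B ⊆ G.edgeSet, A ⊆ B →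
      (G.deleteEdges B).induce S = ((G.deleteEdges A).induce S).deleteEdges (f₁ ⁻¹' B) := by
    intro B hBE hAB
    ext x y
    show (G.deleteEdges B).Adj ↑x ↑y ↔ _
    rw [deleteEdges_adj, deleteEdges_adj]
    show _ ↔ ((G.deleteEdges A).Adj ↑x ↑y ∧ s(x, y) ∉ f₁ ⁻¹' B)
    rw [Set.mem_preimage, hf₁, Sym2.map_pair_eq, deleteEdges_adj]
    constructor
    · rintro ⟨h1, h2⟩
      exact ⟨⟨h1, fun h => h2 (hAB h)⟩, h2⟩
    · rintro ⟨⟨h1, -⟩, h2⟩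
      exact ⟨h1, h2⟩
  have hgraph₂ : ∀ B ⊆ G.edgeSet, A ⊆ B →
      (G.deleteEdges B).induce Sᶜ = ((G.deleteEdges A).induce Sᶜ).deleteEdges (f₂ ⁻¹' B) := by
    intro B hBE hAB
    ext x y
    show (G.deleteEdges B).Adj ↑x ↑y ↔ _
    rw [deleteEdges_adj, deleteEdges_adj]
    show _ ↔ ((G.deleteEdges A).Adj ↑x ↑y ∧ s(x, y) ∉ f₂ ⁻¹' B)
    rw [Set.mem_preimage, hf₂, Sym2.map_pair_eq, deleteEdges_adj]
    constructor
    · rintro ⟨h1, h2⟩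
      exact ⟨⟨h1, fun h => h2 (hAB h)⟩, h2⟩
    · rintro ⟨⟨h1, -⟩, h2⟩
      exact ⟨h1, h2⟩
  -- cardinality decomposition
  have hncard : ∀ B ⊆ G.edgeSet, A ⊆ B →
      B.ncard = 2 + (f₁ ⁻¹' B).ncard + (f₂ ⁻¹' B).ncard := by
    intro B hBE hAB
    have hdecomp : B = A ∪ ((B ∩ Set.range f₁) ∪ (B ∩ Set.range f₂)) := by
      ext e
      constructor
      · intro he
        by_cases heA : e ∈ A
        · exact Or.inl heA
        · refine Or.inr ?_
          revert he heA
          refine Sym2.inductionOn e (fun u v he heA => ?_)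
          have hadj : (G.deleteEdges A).Adj u v := by
            rw [deleteEdges_adj]
            exact ⟨(mem_edgeSet G).mp (hBE he), heA⟩
          have hiff : u ∈ S ↔ v ∈ S := by
            have heq := ConnectedComponent.connectedComponentMk_eq_of_adj hadj
            rw [hmemS, hmemS, heq]
          by_cases hu : u ∈ S
          · refine Or.inl ⟨he, ?_⟩
            rw [hf₁, mem_range_sym2map]
            intro x hx
            rcases Sym2.mem_iff.mp hx with rfl | rfl
            · exact hu
            · exact hiff.mp hu
          · refine Or.inr ⟨he, ?_⟩
            rw [hf₂, mem_range_sym2map]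
            intro x hx
            rcases Sym2.mem_iff.mp hx with rfl | rfl
            · exact hu
            · exact fun h => hu (hiff.mpr h)
      · rintro (he | he | he)
        · exact hAB he
        · exact he.1
        · exact he.1
    have h1 : (B ∩ Set.range f₁).ncard = (f₁ ⁻¹' B).ncard := by
      rw [← Set.image_preimage_eq_inter_range, Set.ncard_image_of_injective _ hinj₁]
    have h2 : (B ∩ Set.range f₂).ncard = (f₂ ⁻¹' B).ncard := by
      rw [← Set.image_preimage_eq_inter_range, Set.ncard_image_of_injective _ hinj₂]
    have hdisj1 : Disjoint A ((B ∩ Set.range f₁) ∪ (B ∩ Set.range f₂)) := by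
      rw [Set.disjoint_left]
      rintro e heA (he | he)
      · exact hArange1 e heA he.2
      · exact hArange2 e heA he.2
    have hdisj2 : Disjoint (B ∩ Set.range f₁) (B ∩ Set.range f₂) := by
      rw [Set.disjoint_left]
      rintro e ⟨-, he1⟩ ⟨-, he2⟩
      rw [hf₁, mem_range_sym2map] at he1
      rw [hf₂, mem_range_sym2map] at he2
      revert he1 he2
      refine Sym2.inductionOn e (fun u v h1 h2 => ?_)
      exact h2 u (Sym2.mem_mk_left u v) (h1 u (Sym2.mem_mk_left u v))
    calc B.ncard = (A ∪ ((B ∩ Set.range f₁) ∪ (B ∩ Set.range f₂))).ncard := by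
          rw [← hdecomp]
      _ = A.ncard + ((B ∩ Set.range f₁) ∪ (B ∩ Set.range f₂)).ncard :=
          Set.ncard_union_eq hdisj1 (Set.toFinite _) (Set.toFinite _)
      _ = A.ncard + ((B ∩ Set.range f₁).ncard + (B ∩ Set.range f₂).ncard) := by
          rw [Set.ncard_union_eq hdisj2 (Set.toFinite _) (Set.toFinite _)]
      _ = 2 + (f₁ ⁻¹' B).ncard + (f₂ ⁻¹' B).ncard := by
          rw [hcard, h1, h2]; ring
  -- the key identity
  have key : ∀ B ⊆ G.edgeSet, A ⊆ B →
      yVal G B = yVal ((G.deleteEdges A).induce S) (f₁ ⁻¹' B) + yVal ((G.deleteEdges A).induce Sᶜ) (f₂ ⁻¹' B) - 1 := by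
    intro B hBE hAB
    have hcomp : numComp (G.deleteEdges B)
        = numComp (((G.deleteEdges A).induce S).deleteEdges (f₁ ⁻¹' B))
          + numComp (((G.deleteEdges A).induce Sᶜ).deleteEdges (f₂ ⁻¹' B)) := by
      rw [← hgraph₁ B hBE hAB, ← hgraph₂ B hBE hAB]
      exact numComp_eq_add _ _ (hnoncross B hAB)
    rw [yVal, yVal, yVal, hcomp, hncard B hBE hAB]
    push_cast
    ring
  obtain ⟨B₁, hB₁E, hB₁⟩ := yMax_mem ((G.deleteEdges A).induce S)
  obtain ⟨B₂, hB₂E, hB₂⟩ := yMax_mem ((G.deleteEdges A).induce Sᶜ)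
  apply le_antisymm
  · -- yMax G ≤ ...
    obtain ⟨B, hBE, hBmax⟩ := yMax_mem G
    rw [← hBmax]
    by_cases hAB : A ⊆ B
    · rw [key B hBE hAB]
      have i1 := le_yMax (hedge₁ B hBE hAB)
      have i2 := le_yMax (hedge₂ B hBE hAB)
      linarith
    · obtain ⟨e, heA, heB⟩ := Set.not_subset.mp hAB
      revert heA heB
      refine Sym2.inductionOn e (fun u v heA heB => ?_)
      set B' := B ∪ A with hB'def
      have hAB' : A ⊆ B' := Set.subset_union_right
      have hB'E : B' ⊆ G.edgeSet := Set.union_subset hBE hA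
      have hlt : numComp (G.deleteEdges B) < numComp (G.deleteEdges B') := by
        refine numComp_lt (u := u) (v := v) (deleteEdges_anti Set.subset_union_left) ?_ ?_
        · exact Adj.reachable (by
            rw [deleteEdges_adj]
            exact ⟨(mem_edgeSet G).mp (hA heA), heB⟩)
        · intro hreach
          exact hAreach u v heA (hreach.mono (deleteEdges_anti hAB'))
      have hcardB' : B'.ncard ≤ B.ncard + 2 := by
        calc B'.ncard ≤ B.ncard + A.ncard := Set.ncard_union_le B A
          _ = B.ncard + 2 := by rw [hcard]
      have h1 : yVal G B ≤ yVal G B' := by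
        rw [yVal, yVal]
        have hc1 : (numComp (G.deleteEdges B) : ℤ) + 1 ≤ numComp (G.deleteEdges B') := by
          exact_mod_cast hlt
        have hc2 : (B'.ncard : ℤ) ≤ (B.ncard : ℤ) + 2 := by exact_mod_cast hcardB'
        linarith
      have h2 := key B' hB'E hAB'
      have i1 := le_yMax (hedge₁ B' hB'E hAB')
      have i2 := le_yMax (hedge₂ B' hB'E hAB')
      linarith
  · -- ... ≤ yMax G
    set B := A ∪ (f₁ '' B₁ ∪ f₂ '' B₂) with hBdef
    have hBE : B ⊆ G.edgeSet := by
      refine Set.union_subset hA (Set.union_subset ?_ ?_)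
      · rintro e ⟨e', he', rfl⟩
        revert he'
        refine Sym2.inductionOn e' (fun x y he' => ?_)
        rw [hf₁, Sym2.map_pair_eq, mem_edgeSet]
        have hadj : ((G.deleteEdges A).induce S).Adj x y := (mem_edgeSet _).mp (hB₁E he')
        have hH : (G.deleteEdges A).Adj ↑x ↑y := hadj
        rw [deleteEdges_adj] at hH
        exact hH.1
      · rintro e ⟨e', he', rfl⟩
        revert he'
        refine Sym2.inductionOn e' (fun x y he' => ?_)
        rw [hf₂, Sym2.map_pair_eq, mem_edgeSet]
        have hadj : ((G.deleteEdges A).induce Sᶜ).Adj x y := (mem_edgeSet _).mp (hB₂E he')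
        have hH : (G.deleteEdges A).Adj ↑x ↑y := hadj
        rw [deleteEdges_adj] at hH
        exact hH.1
    have hAB : A ⊆ B := Set.subset_union_left
    have hpre₁ : f₁ ⁻¹' B = B₁ := by
      rw [hBdef, Set.preimage_union, Set.preimage_union, Set.preimage_image_eq _ hinj₁]
      have e1 : f₁ ⁻¹' A = ∅ := by
        ext e
        simp only [Set.mem_preimage, Set.mem_empty_iff_false, iff_false]
        intro he
        exact hArange1 _ he ⟨e, rfl⟩
      have e2 : f₁ ⁻¹' (f₂ '' B₂) = ∅ := by
        ext e
        simp only [Set.mem_preimage, Set.mem_empty_iff_false, iff_false]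
        rintro ⟨e', -, heq⟩
        have hin2 : ∀ x ∈ f₁ e, x ∈ Sᶜ := by
          rw [← heq]
          exact mem_range_sym2map.mp ⟨e', rfl⟩
        have hin1 : ∀ x ∈ f₁ e, x ∈ S := mem_range_sym2map.mp ⟨e, rfl⟩
        revert hin1 hin2
        refine Sym2.inductionOn e (fun x y h2 h1 => ?_)
        have hm : (↑x : V) ∈ f₁ s(x, y) := by
          rw [hf₁, Sym2.map_pair_eq]
          exact Sym2.mem_mk_left _ _
        exact h2 ↑x hm (h1 ↑x hm)
      rw [e1, e2]
      simp
    have hpre₂ : f₂ ⁻¹' B = B₂ := by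
      rw [hBdef, Set.preimage_union, Set.preimage_union, Set.preimage_image_eq _ hinj₂]
      have e1 : f₂ ⁻¹' A = ∅ := by
        ext e
        simp only [Set.mem_preimage, Set.mem_empty_iff_false, iff_false]
        intro he
        exact hArange2 _ he ⟨e, rfl⟩
      have e2 : f₂ ⁻¹' (f₁ '' B₁) = ∅ := by
        ext e
        simp only [Set.mem_preimage, Set.mem_empty_iff_false, iff_false]
        rintro ⟨e', -, heq⟩
        have hin1 : ∀ x ∈ f₂ e, x ∈ S := by
          rw [← heq]
          exact mem_range_sym2map.mp ⟨e', rfl⟩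
        have hin2 : ∀ x ∈ f₂ e, x ∈ Sᶜ := mem_range_sym2map.mp ⟨e, rfl⟩
        revert hin1 hin2
        refine Sym2.inductionOn e (fun x y h1 h2 => ?_)
        have hm : (↑x : V) ∈ f₂ s(x, y) := by
          rw [hf₂, Sym2.map_pair_eq]
          exact Sym2.mem_mk_left _ _
        exact h2 ↑x hm (h1 ↑x hm)
      rw [e1, e2]
      simp
    have hkey := key B hBE hAB
    rw [hpre₁, hpre₂, hB₁, hB₂] at hkey
    rw [← hkey]
    exact le_yMax hBE
end

section
/- Let G be a connected finite simple graph and A ⊆ E(G) an edge subset with y_G = y_G(A). Then every connected component F of G − A is an induced subgraph of G (i.e., F equals the subgraph of G induced by V(F)), and y_F = 1. In particular, if G − A has exactly one component F, then F = G, y_G = 1, A = ∅, and c(G − A) = 1. -/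
open SimpleGraph

private lemma numComp_congr {V : Type*} {G H : SimpleGraph V}
    (h : ∀ u v, G.Reachable u v ↔ H.Reachable u v) : numComp G = numComp H :=
  Nat.card_congr (Quot.congrRight h : G.ConnectedComponent ≃ H.ConnectedComponent)

private lemma numComp_le {V : Type*} [Finite V] (G : SimpleGraph V) :
    numComp G ≤ Nat.card V :=
  Nat.card_le_card_of_surjective G.connectedComponentMk (fun c => c.exists_rep)

private lemma numComp_one {V : Type*} {H : SimpleGraph V} (h : H.Connected) :
    numComp H = 1 := by
  rw [numComp, Nat.card_eq_one_iff_unique]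
  refine ⟨⟨fun x y => ?_⟩, ⟨H.connectedComponentMk h.nonempty.some⟩⟩
  exact ConnectedComponent.ind₂ (fun u v => ConnectedComponent.sound (h.preconnected u v)) x y

private lemma yVal_le_yMax {V : Type*} [Finite V] (G : SimpleGraph V) {S : Set (Sym2 V)}
    (hS : S ⊆ G.edgeSet) : yVal G S ≤ yMax G := by
  apply le_csSup
  · refine ⟨2 * (Nat.card V : ℤ), ?_⟩
    rintro y ⟨B, _, rfl⟩
    have h1 : ((numComp (G.deleteEdges B)) : ℤ) ≤ (Nat.card V : ℤ) := by
      exact_mod_cast numComp_le (G.deleteEdges B)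
    have h2 : (0 : ℤ) ≤ (B.ncard : ℤ) := Int.ofNat_nonneg _
    unfold yVal
    omega
  · exact ⟨S, hS, rfl⟩

private lemma reachable_del_of_not_mem {V : Type*} {H : SimpleGraph V}
    {c : H.ConnectedComponent} {B' : Set (Sym2 V)}
    (hB' : ∀ e ∈ B', ∀ a ∈ e, a ∈ c.supp)
    {u v : V} (w : H.Walk u v) :
    u ∉ c.supp → (H.deleteEdges B').Reachable u v := by
  induction w with
  | nil => exact fun _ => Reachable.refl _
  | @cons a b _ hab p ih =>
    intro hu
    have hb : b ∉ c.supp := fun hb => hu (by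
      rw [ConnectedComponent.mem_supp_iff] at hb ⊢
      rw [← hb]; exact ConnectedComponent.connectedComponentMk_eq_of_adj hab)
    have hedge : s(a, b) ∉ B' := fun hmem => hu (hB' _ hmem a (Sym2.mem_mk_left a b))
    exact (SimpleGraph.deleteEdges_adj.mpr ⟨hab, hedge⟩).reachable.trans (ih hb)

private lemma reachable_induce_of_walk {V : Type*} {H : SimpleGraph V}
    {c : H.ConnectedComponent} {B' : Set (Sym2 V)} {B : Set (Sym2 c.supp)}
    (hBB' : ∀ x y : c.supp, (s((x : V), (y : V)) ∈ B' ↔ s(x, y) ∈ B))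
    {u v : V} (w : (H.deleteEdges B').Walk u v) :
    ∀ (hu : u ∈ c.supp) (hv : v ∈ c.supp),
      ((H.induce c.supp).deleteEdges B).Reachable ⟨u, hu⟩ ⟨v, hv⟩ := by
  induction w with
  | nil => exact fun _ _ => Reachable.refl _
  | @cons a b _ hab p ih =>
    intro hu hv
    have habH : H.Adj a b := (SimpleGraph.deleteEdges_adj.mp hab).1
    have hnB' : s(a, b) ∉ B' := (SimpleGraph.deleteEdges_adj.mp hab).2
    have hb : b ∈ c.supp := by
      rw [ConnectedComponent.mem_supp_iff] at hu ⊢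
      rw [← hu]; exact (ConnectedComponent.connectedComponentMk_eq_of_adj habH).symm
    have hadj : ((H.induce c.supp).deleteEdges B).Adj ⟨a, hu⟩ ⟨b, hb⟩ := by
      refine SimpleGraph.deleteEdges_adj.mpr ⟨habH, fun hmem => hnB' ?_⟩
      exact (hBB' ⟨a, hu⟩ ⟨b, hb⟩).mpr hmem
    exact hadj.reachable.trans (ih hb hv)

/-- Hom from the component-with-deleted-edges back into the big graph. -/
private def homDown {V : Type*} {H : SimpleGraph V}
    {c : H.ConnectedComponent} {B' : Set (Sym2 V)} {B : Set (Sym2 c.supp)}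
    (hBB' : ∀ x y : c.supp, (s((x : V), (y : V)) ∈ B' ↔ s(x, y) ∈ B)) :
    ((H.induce c.supp).deleteEdges B) →g (H.deleteEdges B') where
  toFun := Subtype.val
  map_rel' := by
    intro a b hab
    have h1 := (SimpleGraph.deleteEdges_adj.mp hab).1
    have h2 := (SimpleGraph.deleteEdges_adj.mp hab).2
    simp only [comap_adj, Function.Embedding.coe_subtype] at h1
    exact SimpleGraph.deleteEdges_adj.mpr ⟨h1, fun hm => h2 ((hBB' a b).mp hm)⟩

private lemma connected_induce_supp {V : Type*} (H : SimpleGraph V)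
    (c : H.ConnectedComponent) : (H.induce c.supp).Connected := by
  obtain ⟨v, hv⟩ := c.exists_rep
  have hv' : v ∈ c.supp := hv
  rw [connected_iff]
  refine ⟨?_, ⟨⟨v, hv'⟩⟩⟩
  rintro ⟨a, ha⟩ ⟨b, hb⟩
  have hr : H.Reachable a b := ConnectedComponent.exact (ha.trans hb.symm)
  obtain ⟨w⟩ := hr
  have w' : (H.deleteEdges (∅ : Set (Sym2 V))).Walk a b := by
    rw [SimpleGraph.deleteEdges_empty]; exact w
  have := reachable_induce_of_walk (c := c) (B := (∅ : Set (Sym2 c.supp)))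
    (by simp) w' ha hb
  rwa [SimpleGraph.deleteEdges_empty] at this

private lemma numComp_union {V : Type*} [Finite V] (H : SimpleGraph V)
    (c : H.ConnectedComponent) (B : Set (Sym2 c.supp)) :
    numComp (H.deleteEdges (Sym2.map Subtype.val '' B)) + 1
      = numComp H + numComp ((H.induce c.supp).deleteEdges B) := by
  classical
  set B' : Set (Sym2 V) := Sym2.map Subtype.val '' B with hB'def
  have hBB' : ∀ x y : c.supp, (s((x : V), (y : V)) ∈ B' ↔ s(x, y) ∈ B) := by
    intro x y
    constructor
    · rintro ⟨b0, hb0, heq⟩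
      have : b0 = s(x, y) := by
        apply Sym2.map.injective Subtype.val_injective
        rw [heq, Sym2.map_pair_eq]
      rwa [this] at hb0
    · intro h
      exact ⟨s(x, y), h, Sym2.map_pair_eq _ _ _⟩
  have hB'supp : ∀ e ∈ B', ∀ a ∈ e, a ∈ c.supp := by
    rintro e ⟨b0, _, rfl⟩ a ha
    obtain ⟨w, _, rfl⟩ := Sym2.mem_map.mp ha
    exact w.2
  set F := (H.induce c.supp).deleteEdges B with hFdef
  set K := H.deleteEdges B' with hKdef
  let f : V → ({d : H.ConnectedComponent // d ≠ c} ⊕ F.ConnectedComponent) := fun v =>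
    if h : H.connectedComponentMk v = c then
      Sum.inr (F.connectedComponentMk ⟨v, (ConnectedComponent.mem_supp_iff _ _).mpr h⟩)
    else Sum.inl ⟨H.connectedComponentMk v, h⟩
  have hf : ∀ (u v : V), K.Reachable u v → f u = f v := by
    intro u v hr
    have hH : H.connectedComponentMk u = H.connectedComponentMk v :=
      ConnectedComponent.sound (hr.mono (SimpleGraph.deleteEdges_le _))
    by_cases h : H.connectedComponentMk u = c
    · have h' : H.connectedComponentMk v = c := hH ▸ h
      simp only [f, dif_pos h, dif_pos h']
      obtain ⟨w⟩ := hr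
      exact congrArg Sum.inr (ConnectedComponent.sound (reachable_induce_of_walk hBB' w _ _))
    · have h' : ¬ H.connectedComponentMk v = c := hH ▸ h
      simp only [f, dif_neg h, dif_neg h']
      exact congrArg Sum.inl (Subtype.ext hH)
  let ψ : K.ConnectedComponent → ({d : H.ConnectedComponent // d ≠ c} ⊕ F.ConnectedComponent) :=
    Quot.lift f hf
  have hbij : Function.Bijective ψ := by
    constructor
    · intro x y
      refine ConnectedComponent.ind₂ (fun u v huv => ?_) x y
      have huv' : f u = f v := huv
      by_cases h1 : H.connectedComponentMk u = c <;>
        by_cases h2 : H.connectedComponentMk v = c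
      · simp only [f, dif_pos h1, dif_pos h2, Sum.inr.injEq] at huv'
        have hr := ConnectedComponent.exact huv'
        have := hr.map (homDown hBB')
        exact ConnectedComponent.sound this
      · simp only [f, dif_pos h1, dif_neg h2] at huv'
        exact absurd huv' (fun h => by cases h)
      · simp only [f, dif_neg h1, dif_pos h2] at huv'
        exact absurd huv' (fun h => by cases h)
      · simp only [f, dif_neg h1, dif_neg h2, Sum.inl.injEq, Subtype.mk.injEq] at huv'
        obtain ⟨w⟩ := ConnectedComponent.exact huv'
        exact ConnectedComponent.sound (reachable_del_of_not_mem hB'supp w h1)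
    · rintro (⟨d, hd⟩ | e)
      · obtain ⟨u, rfl⟩ := d.exists_rep
        refine ⟨K.connectedComponentMk u, ?_⟩
        have : ψ (K.connectedComponentMk u) = f u := rfl
        rw [this]
        have hd' : ¬ H.connectedComponentMk u = c := hd
        simp only [f]
        rw [dif_neg hd']
        rfl
      · obtain ⟨⟨v, hv⟩, rfl⟩ := e.exists_rep
        refine ⟨K.connectedComponentMk v, ?_⟩
        have : ψ (K.connectedComponentMk v) = f v := rfl
        rw [this]
        have hv' : H.connectedComponentMk v = c := (ConnectedComponent.mem_supp_iff _ _).mp hv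
        simp only [f]
        rw [dif_pos hv']
        rfl
  have hcard : Nat.card K.ConnectedComponent
      = Nat.card {d : H.ConnectedComponent // d ≠ c} + Nat.card F.ConnectedComponent := by
    rw [Nat.card_congr (Equiv.ofBijective ψ hbij), Nat.card_sum]
  have hsplit : Nat.card {d : H.ConnectedComponent // d ≠ c} + 1
      = Nat.card H.ConnectedComponent := by
    haveI : Unique {d : H.ConnectedComponent // d = c} :=
      ⟨⟨⟨c, rfl⟩⟩, by rintro ⟨d, rfl⟩; rfl⟩
    have h2 := Nat.card_congr (Equiv.sumCompl (fun d : H.ConnectedComponent => d = c))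
    rw [Nat.card_sum, Nat.card_unique] at h2
    simp only [ne_eq]
    omega
  simp only [numComp]
  omega

private lemma numComp_diff_singleton {V : Type*} {G : SimpleGraph V} {A : Set (Sym2 V)}
    {u v : V} (h : (G.deleteEdges A).Reachable u v) :
    numComp (G.deleteEdges (A \ {s(u, v)})) = numComp (G.deleteEdges A) := by
  apply numComp_congr
  intro x y
  constructor
  · rintro ⟨w⟩
    induction w with
    | nil => exact Reachable.refl _
    | @cons a b _ hab p ih =>
      have hG : G.Adj a b := (SimpleGraph.deleteEdges_adj.mp hab).1
      have hnm : s(a, b) ∉ A \ {s(u, v)} := (SimpleGraph.deleteEdges_adj.mp hab).2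
      have hstep : (G.deleteEdges A).Reachable a b := by
        by_cases hm : s(a, b) ∈ A
        · have heq : s(a, b) = s(u, v) := by
            by_contra hne
            exact hnm ⟨hm, hne⟩
          rw [Sym2.eq_iff] at heq
          rcases heq with ⟨rfl, rfl⟩ | ⟨rfl, rfl⟩
          · exact h
          · exact h.symm
        · exact (SimpleGraph.deleteEdges_adj.mpr ⟨hG, hm⟩).reachable
      exact hstep.trans ih
  · exact fun hr => hr.mono (SimpleGraph.deleteEdges_anti Set.diff_subset)

/-- If `A` attains `y_G`, then every connected component `F` of `G - A` is an induced
subgraph of `G` and `y_F = 1`; and if `G - A` has exactly one component, then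
`G - A = G`, `y_G = 1`, `A = ∅` and `c(G - A) = 1`. -/
theorem components_induced_of_yMax_attained {V : Type*} [Finite V]
    (G : SimpleGraph V) (hG : G.Connected)
    (A : Set (Sym2 V)) (hA : A ⊆ G.edgeSet) (hy : yMax G = yVal G A) :
    (∀ c : (G.deleteEdges A).ConnectedComponent,
        (G.deleteEdges A).induce c.supp = G.induce c.supp ∧
        yMax ((G.deleteEdges A).induce c.supp) = 1) ∧
    (numComp (G.deleteEdges A) = 1 →
        G.deleteEdges A = G ∧ yMax G = 1 ∧ A = ∅ ∧ numComp (G.deleteEdges A) = 1) := by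
  classical
  set H := G.deleteEdges A with hHdef
  -- no edge of `A` joins two vertices of the same component
  have hno : ∀ a b : V, H.connectedComponentMk a = H.connectedComponentMk b →
      s(a, b) ∉ A := by
    intro a b hab hmem
    have hreach : H.Reachable a b := ConnectedComponent.exact hab
    have hcount := numComp_diff_singleton (G := G) (A := A) hreach
    have hsub : A \ {s(a, b)} ⊆ G.edgeSet := fun e he => hA he.1
    have hle := yVal_le_yMax G hsub
    rw [hy] at hle
    have hApos : 0 < A.ncard := by
      rw [Set.ncard_pos (Set.toFinite A)]
      exact ⟨_, hmem⟩
    have hnc : (A \ {s(a, b)}).ncard = A.ncard - 1 :=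
      Set.ncard_diff_singleton_of_mem hmem
    unfold yVal at hle
    rw [hcount, hnc] at hle
    have : ((A.ncard - 1 : ℕ) : ℤ) = (A.ncard : ℤ) - 1 := by
      push_cast [hApos]
      omega
    omega
  have part1 : ∀ c : H.ConnectedComponent,
      H.induce c.supp = G.induce c.supp ∧ yMax (H.induce c.supp) = 1 := by
    intro c
    have hind : H.induce c.supp = G.induce c.supp := by
      ext a b
      simp only [comap_adj, Function.Embedding.coe_subtype, hHdef,
        SimpleGraph.deleteEdges_adj]
      refine ⟨fun h => h.1, fun h => ⟨h, ?_⟩⟩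
      exact hno a b (a.2.trans b.2.symm)
    refine ⟨hind, ?_⟩
    have hFconn : (H.induce c.supp).Connected := connected_induce_supp H c
    have hub : ∀ y ∈ { y : ℤ | ∃ B ⊆ (H.induce c.supp).edgeSet, yVal (H.induce c.supp) B = y },
        y ≤ 1 := by
      rintro y ⟨B, hB, rfl⟩
      set B' : Set (Sym2 V) := Sym2.map Subtype.val '' B with hB'def
      have hcount := numComp_union H c B
      have hB'prop : ∀ e ∈ B', e ∈ G.edgeSet ∧ e ∉ A := by
        rintro e ⟨b0, hb0, rfl⟩
        induction b0 using Sym2.ind with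
        | _ x y =>
          have hadj : (H.induce c.supp).Adj x y := (SimpleGraph.mem_edgeSet _).mp (hB hb0)
          have hadjH : H.Adj (x : V) (y : V) := by
            simpa only [comap_adj, Function.Embedding.coe_subtype] using hadj
          have hadjH' : (G.deleteEdges A).Adj (x : V) (y : V) := hadjH
          rw [SimpleGraph.deleteEdges_adj] at hadjH'
          simp only [Sym2.map_pair_eq]
          exact ⟨(SimpleGraph.mem_edgeSet _).mpr hadjH'.1, hadjH'.2⟩
      have hdisj : Disjoint A B' := by
        rw [Set.disjoint_right]
        exact fun e he => (hB'prop e he).2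
      have hsub : A ∪ B' ⊆ G.edgeSet := by
        rintro e (he | he)
        · exact hA he
        · exact (hB'prop e he).1
      have hncB' : B'.ncard = B.ncard :=
        Set.ncard_image_of_injective B (Sym2.map.injective Subtype.val_injective)
      have hncU : (A ∪ B').ncard = A.ncard + B.ncard := by
        rw [Set.ncard_union_eq hdisj (Set.toFinite A) (Set.toFinite B'), hncB']
      have hdel : G.deleteEdges (A ∪ B') = H.deleteEdges B' := by
        rw [hHdef, SimpleGraph.deleteEdges_deleteEdges]
      have hle := yVal_le_yMax G hsub
      rw [hy] at hle
      unfold yVal at hle ⊢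
      rw [hdel, hncU, ← hHdef] at hle
      have hc1 : (numComp (H.deleteEdges B') : ℤ) + 1
          = (numComp H : ℤ) + (numComp ((H.induce c.supp).deleteEdges B) : ℤ) := by
        exact_mod_cast hcount
      push_cast at hle ⊢
      omega
    have hmem : (1 : ℤ) ∈ { y : ℤ | ∃ B ⊆ (H.induce c.supp).edgeSet,
        yVal (H.induce c.supp) B = y } := by
      refine ⟨∅, Set.empty_subset _, ?_⟩
      unfold yVal
      rw [SimpleGraph.deleteEdges_empty, numComp_one hFconn, Set.ncard_empty]
      norm_num
    exact IsGreatest.csSup_eq ⟨hmem, hub⟩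
  refine ⟨part1, ?_⟩
  intro h1
  have hyv : yVal G ∅ = 1 := by
    unfold yVal
    rw [SimpleGraph.deleteEdges_empty, numComp_one hG, Set.ncard_empty]
    norm_num
  have hle := yVal_le_yMax G (Set.empty_subset G.edgeSet)
  rw [hy, hyv] at hle
  unfold yVal at hle
  rw [← hHdef, h1] at hle
  have hA0 : A.ncard = 0 := by omega
  have hAe : A = ∅ := (Set.ncard_eq_zero (Set.toFinite A)).mp hA0
  subst hAe
  rw [SimpleGraph.deleteEdges_empty] at hHdef
  refine ⟨hHdef, ?_, rfl, h1⟩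
  rw [hy]
  exact hyv
end

section
/- Let G be a connected finite simple graph and A ⊆ E(G) an edge subset with y_G = y_G(A). For any k ≥ 2 distinct connected components F_1, F_2, …, F_k of G − A, the set E(F_1, …, F_k) of edges of G joining vertices lying in two distinct components among F_1, …, F_k satisfies |E(F_1, …, F_k)| ≤ 2k − 2; in particular, |E(F_i, F_j)| ≤ 2 for all 1 ≤ i < j ≤ k. -/
open SimpleGraph

/-- Counting lemma: if `φ : α → β` is injective outside the range of an injective
`F : Fin k → α` (`k ≥ 1`), then `|α| + 1 ≤ |β| + k`. -/
lemma aux_card_le {α β : Type*} [Finite α] [Finite β] (φ : α → β) (k : ℕ) (hk : 1 ≤ k)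
    (F : Fin k → α) (hF : Function.Injective F)
    (h : ∀ a a', φ a = φ a' → a ∉ Set.range F → a = a') :
    Nat.card α + 1 ≤ Nat.card β + k := by
  classical
  haveI : NeZero k := ⟨by omega⟩
  set γ := {i : Fin k // i ≠ 0} with hγ
  have hdich : ∀ x : α, ¬(∃ i : Fin k, i ≠ 0 ∧ F i = x) → x ∉ Set.range F ∨ x = F 0 := by
    intro x hx
    by_cases hr : x ∈ Set.range F
    · obtain ⟨i, hi⟩ := hr
      by_cases hi0 : i = 0
      · right; rw [← hi, hi0]
      · exact absurd ⟨i, hi0, hi⟩ hx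
    · exact Or.inl hr
  let f : α → β ⊕ γ := fun a =>
    if hx : ∃ i : Fin k, i ≠ 0 ∧ F i = a then Sum.inr ⟨hx.choose, hx.choose_spec.1⟩
    else Sum.inl (φ a)
  have hf : Function.Injective f := by
    intro a a' hee
    by_cases h1 : ∃ i : Fin k, i ≠ 0 ∧ F i = a <;>
      by_cases h2 : ∃ i : Fin k, i ≠ 0 ∧ F i = a'
    · rw [show f a = _ from dif_pos h1, show f a' = _ from dif_pos h2] at hee
      have : h1.choose = h2.choose := by
        have h' := Sum.inr.inj hee
        exact Subtype.ext_iff.mp h'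
      rw [← h1.choose_spec.2, ← h2.choose_spec.2, this]
    · rw [show f a = _ from dif_pos h1, show f a' = _ from dif_neg h2] at hee
      exact absurd hee (by simp)
    · rw [show f a = _ from dif_neg h1, show f a' = _ from dif_pos h2] at hee
      exact absurd hee (by simp)
    · rw [show f a = _ from dif_neg h1, show f a' = _ from dif_neg h2] at hee
      have hφ : φ a = φ a' := by simpa using hee
      rcases hdich a h1 with ha | ha
      · exact h a a' hφ ha
      · rcases hdich a' h2 with ha' | ha'
        · exact (h a' a hφ.symm ha').symm
        · rw [ha, ha']
  have hcard : Nat.card α ≤ Nat.card (β ⊕ γ) := Nat.card_le_card_of_injective f hf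
  have hγc : Nat.card γ = k - 1 := by
    rw [hγ, Nat.card_eq_fintype_card]
    have : Fintype.card {i : Fin k // ¬ i = 0} = Fintype.card (Fin k) - Fintype.card {i : Fin k // i = 0} :=
      Fintype.card_subtype_compl _
    rw [this, Fintype.card_subtype_eq, Fintype.card_fin]
  rw [Nat.card_sum, hγc] at hcard
  omega

/-- Main auxiliary lemma: the first part of the theorem, for any `k ≥ 1`. -/
lemma crossCard {V : Type*} [Finite V] (G : SimpleGraph V)
    (A : Set (Sym2 V)) (hA : A ⊆ G.edgeSet) (hy : yMax G = yVal G A)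
    (k : ℕ) (hk : 1 ≤ k)
    (F : Fin k → (G.deleteEdges A).ConnectedComponent) (hF : Function.Injective F) :
    {e : Sym2 V | ∃ i j : Fin k, i ≠ j ∧
        ∃ u ∈ (F i).supp, ∃ v ∈ (F j).supp, G.Adj u v ∧ e = s(u, v)}.ncard ≤ 2 * k - 2 := by
  classical
  set B := {e : Sym2 V | ∃ i j : Fin k, i ≠ j ∧
      ∃ u ∈ (F i).supp, ∃ v ∈ (F j).supp, G.Adj u v ∧ e = s(u, v)} with hB
  -- B ⊆ A
  have hBA : B ⊆ A := by
    intro e he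
    obtain ⟨i, j, hij, u, hu, v, hv, hadj, rfl⟩ := he
    by_contra hne
    have : (G.deleteEdges A).Adj u v := deleteEdges_adj.mpr ⟨hadj, hne⟩
    have : (G.deleteEdges A).connectedComponentMk u = (G.deleteEdges A).connectedComponentMk v :=
      ConnectedComponent.eq.mpr this.reachable
    rw [(ConnectedComponent.mem_supp_iff _ _).mp hu, (ConnectedComponent.mem_supp_iff _ _).mp hv] at this
    exact hij (hF this)
  set A' := A \ B with hA'
  have hA'A : A' ⊆ A := Set.diff_subset
  -- walking in G - A' starting outside ⋃ F i stays in the same component of G - A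
  have key : ∀ v w : V, (G.deleteEdges A').Walk v w →
      (G.deleteEdges A).connectedComponentMk v ∉ Set.range F →
      (G.deleteEdges A).connectedComponentMk v = (G.deleteEdges A).connectedComponentMk w := by
    intro v w p
    induction p with
    | nil => intro _; rfl
    | @cons u x w h p ih =>
      intro hu
      have hadj : G.Adj u x ∧ s(u, x) ∉ A' := deleteEdges_adj.mp h
      have hstep : (G.deleteEdges A).connectedComponentMk u
          = (G.deleteEdges A).connectedComponentMk x := by
        by_cases he : s(u, x) ∈ A
        · exfalso
          have heB : s(u, x) ∈ B := by
            by_contra hnb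
            exact hadj.2 ⟨he, hnb⟩
          obtain ⟨i, j, hij, a, ha, b, hb, hadj2, heq⟩ := heB
          rcases Sym2.eq_iff.mp heq with ⟨rfl, rfl⟩ | ⟨rfl, rfl⟩
          · exact hu ⟨i, ((ConnectedComponent.mem_supp_iff _ _).mp ha).symm ▸ rfl⟩
          · exact hu ⟨j, ((ConnectedComponent.mem_supp_iff _ _).mp hb).symm ▸ rfl⟩
        · have : (G.deleteEdges A).Adj u x := deleteEdges_adj.mpr ⟨hadj.1, he⟩
          exact ConnectedComponent.eq.mpr this.reachable
      rw [hstep]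
      exact ih (hstep ▸ hu)
  -- the induced map on components
  have hle : G.deleteEdges A ≤ G.deleteEdges A' := by
    intro v w hvw
    rw [deleteEdges_adj] at hvw ⊢
    exact ⟨hvw.1, fun hm => hvw.2 (hA'A hm)⟩
  set φ : (G.deleteEdges A).ConnectedComponent → (G.deleteEdges A').ConnectedComponent :=
    ConnectedComponent.map (Hom.ofLE hle) with hφ
  have hinj : ∀ C D, φ C = φ D → C ∉ Set.range F → C = D := by
    intro C D
    refine ConnectedComponent.ind (fun v => ConnectedComponent.ind (fun w => ?_) D) C
    intro hCD hC
    have : (G.deleteEdges A').connectedComponentMk v = (G.deleteEdges A').connectedComponentMk w := by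
      simpa [hφ, ConnectedComponent.map_mk, Hom.ofLE] using hCD
    obtain ⟨p⟩ := ConnectedComponent.eq.mp this
    exact key v w p hC
  have hcount : numComp (G.deleteEdges A) + 1 ≤ numComp (G.deleteEdges A') + k :=
    aux_card_le φ k hk F hF hinj
  -- ncard arithmetic
  have hsum : A'.ncard + B.ncard = A.ncard := by
    rw [hA']
    exact Set.ncard_diff_add_ncard_of_subset hBA (Set.toFinite A)
  -- maximality of yVal at A
  have hmem : yVal G A' ∈ {y : ℤ | ∃ A ⊆ G.edgeSet, yVal G A = y} :=
    ⟨A', hA'A.trans hA, rfl⟩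
  have hbdd : BddAbove {y : ℤ | ∃ A ⊆ G.edgeSet, yVal G A = y} := by
    refine ⟨2 * Nat.card V, ?_⟩
    rintro y ⟨A₀, -, rfl⟩
    have hc : numComp (G.deleteEdges A₀) ≤ Nat.card V :=
      Nat.card_le_card_of_surjective (G.deleteEdges A₀).connectedComponentMk
        (fun C => C.exists_rep)
    unfold yVal
    have : (numComp (G.deleteEdges A₀) : ℤ) ≤ (Nat.card V : ℤ) := by exact_mod_cast hc
    have hn : (0 : ℤ) ≤ (A₀.ncard : ℤ) := Int.natCast_nonneg _
    linarith
  have hmax : yVal G A' ≤ yVal G A := hy ▸ le_csSup hbdd hmem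
  rw [yVal, yVal] at hmax
  omega

/-- If `A` attains `y_G`, then for any `k ≥ 2` distinct components `F₁, …, F_k` of `G - A`,
the set of edges of `G` joining distinct components satisfies `|E(F₁, …, F_k)| ≤ 2k - 2`;
in particular `|E(F_i, F_j)| ≤ 2` for `i ≠ j`. -/
theorem crossEdges_card_le_of_yMax_attained {V : Type*} [Finite V]
    (G : SimpleGraph V) (hG : G.Connected)
    (A : Set (Sym2 V)) (hA : A ⊆ G.edgeSet) (hy : yMax G = yVal G A)
    (k : ℕ) (hk : 2 ≤ k)
    (F : Fin k → (G.deleteEdges A).ConnectedComponent) (hF : Function.Injective F) :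
    ({e : Sym2 V | ∃ i j : Fin k, i ≠ j ∧
        ∃ u ∈ (F i).supp, ∃ v ∈ (F j).supp, G.Adj u v ∧ e = s(u, v)}.ncard ≤ 2 * k - 2) ∧
    ∀ i j : Fin k, i ≠ j →
      ({e : Sym2 V | ∃ u ∈ (F i).supp, ∃ v ∈ (F j).supp,
          G.Adj u v ∧ e = s(u, v)}.ncard ≤ 2) := by
  constructor
  · exact crossCard G A hA hy k (by omega) F hF
  · intro i j hij
    set F2 : Fin 2 → (G.deleteEdges A).ConnectedComponent :=
      fun t => if t = 0 then F i else F j with hF2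
    have hF2inj : Function.Injective F2 := by
      intro a b hab
      fin_cases a <;> fin_cases b <;> simp_all [hF2]
      · exact hij (hF hab)
      · exact hij (hF hab.symm)
    have hsub : {e : Sym2 V | ∃ u ∈ (F i).supp, ∃ v ∈ (F j).supp, G.Adj u v ∧ e = s(u, v)} ⊆
        {e : Sym2 V | ∃ a b : Fin 2, a ≠ b ∧
          ∃ u ∈ (F2 a).supp, ∃ v ∈ (F2 b).supp, G.Adj u v ∧ e = s(u, v)} := by
      rintro e ⟨u, hu, v, hv, hadj, rfl⟩
      exact ⟨0, 1, by decide, u, by simpa [hF2] using hu, v, by simpa [hF2] using hv, hadj, rfl⟩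
    have := crossCard G A hA hy 2 (by omega) F2 hF2inj
    calc _ ≤ _ := Set.ncard_le_ncard hsub (Set.toFinite _)
    _ ≤ 2 * 2 - 2 := this
end

section
/- If G is a 4-edge-connected finite simple graph, then x_G = 1 and y_G = 1. -/
open SimpleGraph

/-- A finite simple graph is `k`-edge-connected if it has at least two vertices and removing
fewer than `k` edges leaves it connected. -/
def EdgeConnected {V : Type*} (G : SimpleGraph V) (k : ℕ) : Prop :=
  1 < Nat.card V ∧ ∀ A ⊆ G.edgeSet, A.ncard < k → (G.deleteEdges A).Connected

/-- `x_G`: the minimum, over all spanning trees `T` of `G`, of the number of connected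
components of `G - E(T)`. -/
noncomputable def xMin {V : Type*} (G : SimpleGraph V) : ℕ :=
  sInf { m : ℕ | ∃ T : SimpleGraph V, T ≤ G ∧ T.IsTree ∧
    numComp (G.deleteEdges T.edgeSet) = m }

namespace TP
variable {V : Type*}



lemma reach_split {G : SimpleGraph V} {u v x y : V} (w : G.Walk x y) :
    (G.deleteEdges {s(u,v)}).Reachable x y ∨
    ((G.deleteEdges {s(u,v)}).Reachable x u ∧ (G.deleteEdges {s(u,v)}).Reachable v y) ∨
    ((G.deleteEdges {s(u,v)}).Reachable x v ∧ (G.deleteEdges {s(u,v)}).Reachable u y) := by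
  set G' := G.deleteEdges {s(u,v)} with hG'
  induction w with
  | nil => exact Or.inl (Reachable.refl _)
  | @cons a b c ha q ih =>
    by_cases he : s(a,b) = s(u,v)
    · rw [Sym2.eq_iff] at he
      rcases he with ⟨rfl,rfl⟩|⟨rfl,rfl⟩
      · rcases ih with h | ⟨h1,h2⟩ | ⟨h1,h2⟩
        · exact Or.inr (Or.inl ⟨Reachable.refl _, h⟩)
        · exact Or.inl (h1.symm.trans h2)
        · exact Or.inl h2
      · rcases ih with h | ⟨h1,h2⟩ | ⟨h1,h2⟩
        · exact Or.inr (Or.inr ⟨Reachable.refl _, h⟩)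
        · exact Or.inl h2
        · exact Or.inl (h1.symm.trans h2)
    · have ha' : G'.Adj a b := by rw [hG']; simp only [deleteEdges_adj]; exact ⟨ha, by simpa using he⟩
      rcases ih with h | ⟨h1,h2⟩ | ⟨h1,h2⟩
      · exact Or.inl (ha'.reachable.trans h)
      · exact Or.inr (Or.inl ⟨ha'.reachable.trans h1, h2⟩)
      · exact Or.inr (Or.inr ⟨ha'.reachable.trans h1, h2⟩)

lemma reachable_of_walk_pointwise {G H : SimpleGraph V} {x y : V} (w : G.Walk x y)
    (h : ∀ a b, G.Adj a b → s(a,b) ∈ w.edges → H.Reachable a b) : H.Reachable x y := by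
  induction w with
  | nil => exact Reachable.refl _
  | @cons a b c ha q ih =>
    exact (h _ _ ha (by simp)).trans (ih fun a b hab hm => h a b hab (by simp [hm]))

lemma exists_boundary_edge {G : SimpleGraph V} {α : Type*} (f : V → α) {u v : V} (w : G.Walk u v)
    (hc : f v ≠ f u) : ∃ a b, G.Adj a b ∧ s(a,b) ∈ w.edges ∧ f a = f u ∧ f b ≠ f u := by
  induction w with
  | nil => exact absurd rfl hc
  | @cons a b c ha q ih =>
    by_cases hb : f b = f a
    · obtain ⟨x, y, hxy, hm, h1, h2⟩ := ih (by rw [hb]; exact hc)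
      exact ⟨x, y, hxy, by simp [hm], by rw [h1, hb], by rw [hb] at h2; exact h2⟩
    · exact ⟨a, b, ha, by simp, rfl, hb⟩

lemma isAcyclic_anti {G H : SimpleGraph V} (h : H ≤ G) (hG : G.IsAcyclic) : H.IsAcyclic := by
  intro v c hc
  exact hG (c.mapLe h) (hc.mapLe h)

lemma numComp_pos [Finite V] [Nonempty V] (G : SimpleGraph V) : 0 < numComp G := by
  have : Nonempty G.ConnectedComponent := ⟨G.connectedComponentMk (Classical.arbitrary V)⟩
  have : Finite G.ConnectedComponent := Quot.finite _
  exact Nat.card_pos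

lemma numComp_eq_one_iff [Finite V] {G : SimpleGraph V} : numComp G = 1 ↔ G.Connected := by
  rw [numComp, Nat.card_eq_one_iff_unique]
  constructor
  · rintro ⟨hs, ⟨c⟩⟩
    obtain ⟨v, rfl⟩ := c.exists_rep
    have hne : Nonempty V := ⟨v⟩
    rw [connected_iff]
    refine ⟨fun a b => ?_, hne⟩
    have := hs.allEq (G.connectedComponentMk a) (G.connectedComponentMk b)
    exact (ConnectedComponent.eq).1 this
  · intro h
    have hne : Nonempty V := h.nonempty
    rw [connected_iff] at h
    refine ⟨⟨ConnectedComponent.ind₂ fun a b => ConnectedComponent.sound (h.1 a b)⟩,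
      ⟨G.connectedComponentMk (Classical.arbitrary V)⟩⟩






lemma numComp_deleteEdge [Finite V] {G : SimpleGraph V} {u v : V}
    (huv : G.Adj u v) (hnr : ¬ (G.deleteEdges {s(u,v)}).Reachable u v) :
    numComp (G.deleteEdges {s(u,v)}) = numComp G + 1 := by
  classical
  set G' := G.deleteEdges {s(u,v)} with hG'
  have hle : G' ≤ G := by rw [hG']; exact deleteEdges_le _
  have hsym : ∀ {x y : V}, G'.Reachable x y → G'.Reachable x v → G'.Reachable y v :=
    fun hxy hxv => hxy.symm.trans hxv
  have h1 : ∀ (x y : V) (p : G'.Walk x y), p.IsPath →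
      (if G'.Reachable x v then (Sum.inr () : G.ConnectedComponent ⊕ Unit)
        else Sum.inl (G.connectedComponentMk x)) =
      (if G'.Reachable y v then (Sum.inr () : G.ConnectedComponent ⊕ Unit)
        else Sum.inl (G.connectedComponentMk y)) := by
    intro x y p _
    have hr : G'.Reachable x y := ⟨p⟩
    by_cases hxv : G'.Reachable x v
    · rw [if_pos hxv, if_pos (hsym hr hxv)]
    · rw [if_neg hxv, if_neg (fun hyv => hxv (hsym hr.symm hyv))]
      exact congrArg Sum.inl (ConnectedComponent.sound (hr.mono hle))
  have h2 : ∀ (x y : V) (p : G.Walk x y), p.IsPath →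
      (if G'.Reachable x v then G'.connectedComponentMk u else G'.connectedComponentMk x) =
      (if G'.Reachable y v then G'.connectedComponentMk u else G'.connectedComponentMk y) := by
    intro x y p _
    rcases reach_split (u := u) (v := v) p with hr | ⟨hxu, hvy⟩ | ⟨hxv, huy⟩
    · by_cases hxv : G'.Reachable x v
      · rw [if_pos hxv, if_pos (hsym hr hxv)]
      · rw [if_neg hxv, if_neg (fun hyv => hxv (hsym hr.symm hyv)),
          ConnectedComponent.eq.2 hr]
    · have hyv : G'.Reachable y v := hvy.symm
      have hxv : ¬ G'.Reachable x v := fun hxv => hnr (hxu.symm.trans hxv)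
      rw [if_pos hyv, if_neg hxv, ConnectedComponent.eq.2 hxu]
    · have hyv : ¬ G'.Reachable y v := fun hyv => hnr (huy.trans hyv)
      rw [if_pos hxv, if_neg hyv, ConnectedComponent.eq.2 huy.symm]
  let α : G'.ConnectedComponent → G.ConnectedComponent ⊕ Unit :=
    ConnectedComponent.lift _ h1
  let β' : G.ConnectedComponent → G'.ConnectedComponent := ConnectedComponent.lift _ h2
  let e : G'.ConnectedComponent ≃ G.ConnectedComponent ⊕ Unit := by
    refine ⟨α, Sum.elim β' (fun _ => G'.connectedComponentMk v), ?_, ?_⟩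
    · refine ConnectedComponent.ind fun x => ?_
      by_cases hxv : G'.Reachable x v
      · simp only [α, ConnectedComponent.lift_mk, if_pos hxv, Sum.elim_inr]
        exact ConnectedComponent.sound hxv.symm
      · simp only [α, β', ConnectedComponent.lift_mk, if_neg hxv, Sum.elim_inl,
          ConnectedComponent.lift_mk]
    · rintro (c | ⟨⟩)
      · refine ConnectedComponent.ind (fun x => ?_) c
        by_cases hxv : G'.Reachable x v
        · simp only [β', Sum.elim_inl, ConnectedComponent.lift_mk, if_pos hxv, α]
          have huv' : ¬ G'.Reachable u v := hnr
          have : G.Reachable u x := huv.reachable.trans ((hxv.mono hle).symm)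
          rw [if_neg huv', Sum.inl.injEq]
          exact ConnectedComponent.sound this
        · simp only [β', Sum.elim_inl, ConnectedComponent.lift_mk, if_neg hxv, α]
      · simp only [Sum.elim_inr, α, ConnectedComponent.lift_mk]
        rw [if_pos (Reachable.refl v)]
  have : Finite G.ConnectedComponent := Quot.finite _
  have : Finite G'.ConnectedComponent := Quot.finite _
  rw [numComp, numComp, Nat.card_congr e, Nat.card_sum]
  simp

lemma numComp_deleteEdges_of_acyclic [Finite V] {F : SimpleGraph V} (hF : F.IsAcyclic)
    {S : Set (Sym2 V)} (hS : S ⊆ F.edgeSet) :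
    numComp (F.deleteEdges S) = numComp F + S.ncard := by
  classical
  have key : ∀ (S : Set (Sym2 V)), S.Finite → S ⊆ F.edgeSet →
      numComp (F.deleteEdges S) = numComp F + S.ncard := by
    intro S hfin
    refine Set.Finite.induction_on S hfin (fun _ => by simp) ?_
    · intro e S' heS' hfin ih
      revert heS'
      induction e using Sym2.ind with
      | _ u v =>
      intro heS' hS
      have hSsub : S' ⊆ F.edgeSet := fun f hf => hS (Set.mem_insert_iff.2 (Or.inr hf))
      have heF : s(u,v) ∈ F.edgeSet := hS (Set.mem_insert _ _)
      have hF' : (F.deleteEdges S').IsAcyclic := isAcyclic_anti (deleteEdges_le _) hF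
      have hadj : (F.deleteEdges S').Adj u v := by
        simp only [deleteEdges_adj]
        exact ⟨heF, heS'⟩
      have hbr : (F.deleteEdges S').IsBridge s(u,v) :=
        (isAcyclic_iff_forall_adj_isBridge.1 hF') hadj
      have hnr : ¬ ((F.deleteEdges S').deleteEdges {s(u,v)}).Reachable u v := by
        have := isBridge_iff.1 hbr
        exact this
      have hstep := numComp_deleteEdge hadj hnr
      have heq : (F.deleteEdges S').deleteEdges {s(u,v)} = F.deleteEdges (insert s(u,v) S') := by
        rw [deleteEdges_deleteEdges]
        congr 1
        ext f
        simp [or_comm]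
      rw [heq] at hstep
      rw [hstep, ih hSsub, Set.ncard_insert_of_notMem heS' hfin]
      ring
  exact key S (Set.toFinite S) hS






/-- The set of edges of `G` crossing between distinct components of `H`. -/
def crossSet (G H : SimpleGraph V) : Set (Sym2 V) :=
  {e ∈ G.edgeSet | ¬ Sym2.lift ⟨fun a b => H.Reachable a b, fun _ _ => propext reachable_comm⟩ e}

lemma mem_crossSet {G H : SimpleGraph V} {a b : V} :
    s(a,b) ∈ crossSet G H ↔ s(a,b) ∈ G.edgeSet ∧ ¬ H.Reachable a b := Iff.rfl

lemma crossSet_card [Finite V] {G H : SimpleGraph V} (h4 : EdgeConnected G 4)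
    (hp : 2 ≤ numComp H) : 2 * numComp H ≤ (crossSet G H).ncard := by
  classical
  have : Fintype V := Fintype.ofFinite V
  have : Fintype H.ConnectedComponent := Fintype.ofFinite _
  set cc : V → H.ConnectedComponent := H.connectedComponentMk with hcc
  set SF : Finset (Sym2 V) := (crossSet G H).toFinset with hSF
  have memSF : ∀ {a b : V}, s(a,b) ∈ SF ↔ s(a,b) ∈ G.edgeSet ∧ ¬ H.Reachable a b := by
    intro a b
    rw [hSF, Set.mem_toFinset, mem_crossSet]
  set bd : H.ConnectedComponent → Finset (Sym2 V) :=
    fun c => SF.filter (fun e => ∃ a ∈ e, cc a = c) with hbd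
  -- each component has boundary at least 4
  have hbd4 : ∀ c : H.ConnectedComponent, 4 ≤ (bd c).card := by
    intro c
    by_contra hlt
    push_neg at hlt
    have hBsub : (↑(bd c) : Set (Sym2 V)) ⊆ G.edgeSet := by
      intro e he
      simp only [hbd, Finset.coe_filter, Set.mem_setOf_eq] at he
      have := he.1
      rw [hSF, Set.mem_toFinset] at this
      exact this.1
    have hBcard : (↑(bd c) : Set (Sym2 V)).ncard < 4 := by
      rwa [Set.ncard_coe_finset]
    have hconn := h4.2 _ hBsub hBcard
    obtain ⟨x, hx⟩ := c.exists_rep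
    obtain ⟨c', hc'⟩ : ∃ c' : H.ConnectedComponent, c' ≠ c := by
      have : 1 < Fintype.card H.ConnectedComponent := by
        rwa [← Nat.card_eq_fintype_card]
      obtain ⟨c', hc'⟩ := Fintype.exists_ne_of_one_lt_card this c
      exact ⟨c', hc'⟩
    obtain ⟨y, hy⟩ := c'.exists_rep
    obtain ⟨w⟩ := hconn.preconnected x y
    have hx' : cc x = c := hx
    have hy' : cc y = c' := hy
    have hfy : cc y ≠ cc x := by rw [hx', hy']; exact hc'
    obtain ⟨a, b, hab, hmem, ha, hb⟩ := exists_boundary_edge cc w hfy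
    have habG : G.Adj a b ∧ s(a,b) ∉ (↑(bd c) : Set (Sym2 V)) := by
      have := hab
      rw [deleteEdges_adj] at this
      exact this
    have hcross : s(a,b) ∈ SF := by
      rw [memSF]
      exact ⟨habG.1, fun hr => hb (by rw [← ha]; exact (ConnectedComponent.sound hr).symm)⟩
    have : s(a,b) ∈ bd c := by
      rw [hbd, Finset.mem_filter]
      exact ⟨hcross, a, Sym2.mem_mk_left a b, ha.trans hx'⟩
    exact habG.2 (by exact_mod_cast this)
  -- double counting
  have hdc : ∑ c : H.ConnectedComponent, (bd c).card = 2 * SF.card := by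
    have h1 : ∀ c, (bd c).card = ∑ e ∈ SF, if (∃ a ∈ e, cc a = c) then 1 else 0 := by
      intro c
      rw [hbd, Finset.card_filter]
    rw [Finset.sum_congr rfl (fun c _ => h1 c), Finset.sum_comm]
    have h2 : ∀ e ∈ SF, (∑ c : H.ConnectedComponent, if (∃ a ∈ e, cc a = c) then 1 else 0) = 2 := by
      intro e he
      revert he
      induction e using Sym2.ind with
      | _ a b =>
      intro he
      rw [memSF] at he
      have hab : cc a ≠ cc b := fun h => he.2 (ConnectedComponent.eq.1 h)
      rw [← Finset.card_filter]
      have : Finset.univ.filter (fun c => ∃ x ∈ s(a,b), cc x = c) = {cc a, cc b} := by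
        ext c
        simp only [Finset.mem_filter, Finset.mem_univ, true_and, Finset.mem_insert,
          Finset.mem_singleton, Sym2.mem_iff]
        constructor
        · rintro ⟨x, (rfl|rfl), rfl⟩
          · exact Or.inl rfl
          · exact Or.inr rfl
        · rintro (rfl|rfl)
          · exact ⟨a, Or.inl rfl, rfl⟩
          · exact ⟨b, Or.inr rfl, rfl⟩
      rw [this, Finset.card_pair hab]
    rw [Finset.sum_congr rfl h2, Finset.sum_const, smul_eq_mul, Nat.mul_comm]
  have hsum : 4 * numComp H ≤ ∑ c : H.ConnectedComponent, (bd c).card := by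
    calc 4 * numComp H = ∑ _c : H.ConnectedComponent, 4 := by
          rw [Finset.sum_const, smul_eq_mul, numComp, Nat.card_eq_fintype_card, Nat.mul_comm]
          rfl
      _ ≤ _ := Finset.sum_le_sum (fun c _ => hbd4 c)
  rw [hdc] at hsum
  have : (crossSet G H).ncard = SF.card := by
    rw [hSF, Set.ncard_eq_toFinset_card']
  rw [this]
  omega






lemma sup_edge_delete_self {F : SimpleGraph V} {u v : V} (hnm : s(u,v) ∉ F.edgeSet) :
    (F ⊔ edge u v).deleteEdges {s(u,v)} = F := by
  ext a b
  simp only [deleteEdges_adj, sup_adj, edge_adj, Set.mem_singleton_iff, Sym2.eq_iff]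
  constructor
  · rintro ⟨(h | ⟨h1, h2⟩), h3⟩
    · exact h
    · exact absurd (by tauto) h3
  · intro h
    refine ⟨Or.inl h, ?_⟩
    rintro (⟨rfl, rfl⟩ | ⟨rfl, rfl⟩)
    · exact hnm (F.mem_edgeSet.2 h)
    · exact hnm (F.mem_edgeSet.2 h.symm)

lemma sup_edge_delete_two {F : SimpleGraph V} {u v : V} {f : Sym2 V}
    (hnm : s(u,v) ∉ F.edgeSet) (hne : f ≠ s(u,v)) :
    ((F ⊔ edge u v).deleteEdges {f}).deleteEdges {s(u,v)} = F.deleteEdges {f} := by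
  rw [deleteEdges_deleteEdges, Set.union_comm, ← deleteEdges_deleteEdges,
    sup_edge_delete_self hnm]

/-- Adding an edge between two vertices in distinct components of a forest keeps it a forest. -/
lemma isAcyclic_sup_edge {F : SimpleGraph V} (hF : F.IsAcyclic) {u v : V} (hne : u ≠ v)
    (hnr : ¬ F.Reachable u v) : (F ⊔ edge u v).IsAcyclic := by
  have hnm : s(u,v) ∉ F.edgeSet := fun hm => hnr (F.mem_edgeSet.1 hm).reachable
  rw [isAcyclic_iff_forall_adj_isBridge]
  intro a b hadj
  by_cases heq : s(a,b) = s(u,v)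
  · show ¬ ((F ⊔ edge u v).deleteEdges {s(a,b)}).Reachable a b
    rw [heq, sup_edge_delete_self hnm]
    rw [Sym2.eq_iff] at heq
    rcases heq with ⟨rfl, rfl⟩ | ⟨rfl, rfl⟩
    · exact hnr
    · exact fun h => hnr h.symm
  · have hFadj : F.Adj a b := by
      rcases (sup_adj F (edge u v) a b).1 hadj with h | h
      · exact h
      · rcases (edge_adj u v a b).1 h with ⟨(⟨rfl,rfl⟩ | ⟨rfl,rfl⟩), _⟩
        · exact absurd rfl heq
        · exact absurd (Sym2.eq_swap) heq
    show ¬ ((F ⊔ edge u v).deleteEdges {s(a,b)}).Reachable a b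
    rintro ⟨w⟩
    have hbr : F.IsBridge s(a,b) := (isAcyclic_iff_forall_adj_isBridge.1 hF) hFadj
    have hbr' : ¬ (F.deleteEdges {s(a,b)}).Reachable a b := isBridge_iff.1 hbr
    have hsplit := reach_split (u := u) (v := v) w
    rw [sup_edge_delete_two hnm heq] at hsplit
    have hFle : F.deleteEdges {s(a,b)} ≤ F := deleteEdges_le _
    rcases hsplit with h | ⟨h1, h2⟩ | ⟨h1, h2⟩
    · exact hbr' h
    · exact hnr (((h1.mono hFle).symm.trans hFadj.reachable).trans (h2.mono hFle).symm)
    · exact hnr (((h2.mono hFle).trans hFadj.reachable.symm).trans (h1.mono hFle))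
  
lemma reachable_of_not_acyclic {F : SimpleGraph V} (hF : F.IsAcyclic) {u v : V} (hne : u ≠ v)
    (h : ¬ (F ⊔ edge u v).IsAcyclic) : F.Reachable u v := by
  by_contra hnr
  exact h (isAcyclic_sup_edge hF hne hnr)

/-- Removing a path edge after adding a chord keeps a forest acyclic. -/
lemma isAcyclic_sup_edge_delete {F : SimpleGraph V} (hF : F.IsAcyclic) {u v : V} (hne : u ≠ v)
    (hnm : s(u,v) ∉ F.edgeSet) (p : F.Path u v) {a b : V} (hab : s(a,b) ∈ p.1.edges) :
    ((F ⊔ edge u v).deleteEdges {s(a,b)}).IsAcyclic := by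
  classical
  have habF : s(a,b) ∈ F.edgeSet := p.1.edges_subset_edgeSet hab
  have habne : s(a,b) ≠ s(u,v) := fun h => hnm (h ▸ habF)
  intro x c hc
  by_cases he : s(u,v) ∈ c.edges
  · -- the cycle uses the new edge; we get a second u-v path avoiding s(a,b)
    have hadjreach := adj_and_reachable_delete_edges_iff_exists_cycle.2 ⟨x, c, hc, he⟩
    have hreach : (((F ⊔ edge u v).deleteEdges {s(a,b)}).deleteEdges {s(u,v)}).Reachable u v := by
      exact hadjreach.2
    rw [sup_edge_delete_two hnm habne] at hreach
    obtain ⟨w⟩ := hreach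
    have hsub : ∀ e ∈ w.toPath.1.edges, e ∈ F.edgeSet := by
      intro e hme
      have : e ∈ w.edges := Walk.edges_toPath_subset w hme
      have := Walk.edges_subset_edgeSet _ this
      rw [edgeSet_deleteEdges] at this
      exact this.1
    have hnab : s(a,b) ∉ w.toPath.1.edges := by
      intro hmem
      have := Walk.edges_toPath_subset w hmem
      have := Walk.edges_subset_edgeSet _ this
      rw [edgeSet_deleteEdges] at this
      exact this.2 rfl
    let q : F.Path u v := ⟨(w.toPath.1.transfer F hsub), (w.toPath.2.transfer hsub)⟩
    have : p = q := (isAcyclic_iff_path_unique.1 hF) p q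
    rw [this] at hab
    have : s(a,b) ∈ w.toPath.1.edges := by
      have := hab
      rwa [Walk.edges_transfer] at this
    exact hnab this
  · -- the cycle avoids the new edge: it lives in F
    have hsub : ∀ e ∈ c.edges, e ∈ F.edgeSet := by
      intro e hme
      have h1 := Walk.edges_subset_edgeSet _ hme
      rw [edgeSet_deleteEdges, edgeSet_sup] at h1
      rcases h1.1 with h2 | h2
      · exact h2
      · rw [edge_edgeSet_of_ne hne] at h2
        rw [Set.mem_singleton_iff.1 h2] at hme
        exact absurd hme he
    exact hF (c.transfer F hsub) (hc.transfer hsub)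



lemma edge_le_of_mem {G : SimpleGraph V} {u v : V} (h : s(u,v) ∈ G.edgeSet) : edge u v ≤ G := by
  intro a b hab
  rcases (edge_adj u v a b).1 hab with ⟨(⟨rfl, rfl⟩ | ⟨rfl, rfl⟩), _⟩
  · exact G.mem_edgeSet.1 h
  · exact (G.mem_edgeSet.1 h).symm

lemma edgeSet_newF {F : SimpleGraph V} {u v : V} {f : Sym2 V} (hne : u ≠ v) :
    ((F ⊔ edge u v).deleteEdges {f}).edgeSet = (insert s(u,v) F.edgeSet) \ {f} := by
  rw [edgeSet_deleteEdges, edgeSet_sup, edge_edgeSet_of_ne hne, Set.union_singleton]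

/-- a pair of edge-disjoint spanning forests inside `G` -/
def Valid (G : SimpleGraph V) (F : Bool → SimpleGraph V) : Prop :=
  (∀ i, F i ≤ G ∧ (F i).IsAcyclic) ∧ Disjoint (F true).edgeSet (F false).edgeSet

noncomputable def size (F : Bool → SimpleGraph V) : ℕ :=
  (F true).edgeSet.ncard + (F false).edgeSet.ncard

inductive Step (G : SimpleGraph V) : (Bool → SimpleGraph V) → (Bool → SimpleGraph V) → Prop
  | mk {F : Bool → SimpleGraph V} (i : Bool) {u v a b : V}
      (he : s(u,v) ∈ G.edgeSet) (h1 : s(u,v) ∉ (F true).edgeSet)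
      (h2 : s(u,v) ∉ (F false).edgeSet) (hab : s(a,b) ∈ (F i).edgeSet)
      (hac : (((F i) ⊔ edge u v).deleteEdges {s(a,b)}).IsAcyclic) :
      Step G F (Function.update F i (((F i) ⊔ edge u v).deleteEdges {s(a,b)}))

lemma step_valid_size [Finite V] {G : SimpleGraph V} {F F' : Bool → SimpleGraph V} (hv : Valid G F)
    (hs : Step G F F') : Valid G F' ∧ size F' = size F := by
  classical
  cases hs with
  | @mk i u v a b he h1 h2 hab hac =>
    have hne : u ≠ v := (G.mem_edgeSet.1 he).ne
    have hES := edgeSet_newF (F := F i) (f := s(a,b)) hne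
    have huvi : s(u,v) ∉ (F i).edgeSet := by cases i <;> assumption
    have habne : s(a,b) ≠ s(u,v) := fun hh => huvi (hh ▸ hab)
    have hcard : (((F i) ⊔ edge u v).deleteEdges {s(a,b)}).edgeSet.ncard
        = (F i).edgeSet.ncard := by
      rw [hES, Set.ncard_diff_singleton_of_mem (Set.mem_insert_iff.2 (Or.inr hab)), Set.ncard_insert_of_notMem huvi (Set.toFinite _)]
      omega
    have hle : ((F i) ⊔ edge u v).deleteEdges {s(a,b)} ≤ G :=
      le_trans (deleteEdges_le _) (sup_le (hv.1 i).1 (edge_le_of_mem he))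
    have hsubset : (((F i) ⊔ edge u v).deleteEdges {s(a,b)}).edgeSet
        ⊆ insert s(u,v) (F i).edgeSet := by
      rw [hES]; exact Set.diff_subset.trans (le_refl _)
    constructor
    · constructor
      · intro j
        by_cases hj : j = i
        · subst hj; rw [Function.update_self]; exact ⟨hle, hac⟩
        · rw [Function.update_of_ne hj]; exact hv.1 j
      · -- disjointness
        cases i
        · -- i = false updated
          rw [Function.update_of_ne (by simp), Function.update_self]
          rw [Set.disjoint_right]
          intro e hemem
          rcases Set.mem_insert_iff.1 (hsubset hemem) with rfl | hh
          · exact h1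
          · exact fun hT => (Set.disjoint_left.1 hv.2) hT hh
        · rw [Function.update_self, Function.update_of_ne (by simp)]
          rw [Set.disjoint_left]
          intro e hemem
          rcases Set.mem_insert_iff.1 (hsubset hemem) with rfl | hh
          · exact h2
          · exact fun hT => (Set.disjoint_left.1 hv.2) hh hT
    · cases i
      · simp only [size, Function.update_self, Function.update_of_ne (by simp : true ≠ false)]
        rw [hcard]
      · simp only [size, Function.update_self, Function.update_of_ne (by simp : false ≠ true)]
        rw [hcard]

inductive ReachN (G : SimpleGraph V) (F0 : Bool → SimpleGraph V) :
    ℕ → (Bool → SimpleGraph V) → Prop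
  | zero : ReachN G F0 0 F0
  | succ {n F F'} (h : ReachN G F0 n F) (hs : Step G F F') : ReachN G F0 (n+1) F'

lemma reach_valid_size [Finite V] {G : SimpleGraph V} {F0 : Bool → SimpleGraph V} (hv0 : Valid G F0)
    {n : ℕ} {F : Bool → SimpleGraph V} (h : ReachN G F0 n F) :
    Valid G F ∧ size F = size F0 := by
  induction h with
  | zero => exact ⟨hv0, rfl⟩
  | succ h hs ih =>
    obtain ⟨hv, hsz⟩ := ih
    obtain ⟨hv', hsz'⟩ := step_valid_size hv hs
    exact ⟨hv', hsz'.trans hsz⟩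

lemma mem_of_reach {G : SimpleGraph V} {F0 : Bool → SimpleGraph V}
    {n : ℕ} {F : Bool → SimpleGraph V} (h : ReachN G F0 n F) :
    ∀ (i : Bool) (f : Sym2 V), f ∈ (F i).edgeSet → f ∉ (F0 i).edgeSet →
    ∃ m, m < n ∧ ∃ F', ReachN G F0 m F' ∧ f ∈ G.edgeSet ∧
      f ∉ (F' true).edgeSet ∧ f ∉ (F' false).edgeSet := by
  classical
  induction h with
  | zero => intro i f hf hnf; exact absurd hf hnf
  | @succ n F F' h hs ih =>
    intro i f hf hnf
    cases hs with
    | @mk j u v a b he h1 h2 hab hac =>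
      have hne : u ≠ v := (G.mem_edgeSet.1 he).ne
      by_cases hij : i = j
      · subst hij
        rw [Function.update_self, edgeSet_newF hne] at hf
        rcases Set.mem_insert_iff.1 hf.1 with rfl | hfi
        · exact ⟨n, Nat.lt_succ_self n, F, h, he, h1, h2⟩
        · obtain ⟨m, hm, rest⟩ := ih i f hfi hnf
          exact ⟨m, Nat.lt_succ_of_lt hm, rest⟩
      · rw [Function.update_of_ne hij] at hf
        obtain ⟨m, hm, rest⟩ := ih i f hf hnf
        exact ⟨m, Nat.lt_succ_of_lt hm, rest⟩

/-- the set of "free" edges -/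
def Free (G : SimpleGraph V) (F0 : Bool → SimpleGraph V) : Set (Sym2 V) :=
  {e | e ∈ G.edgeSet ∧ ∃ n F, ReachN G F0 n F ∧ e ∉ (F true).edgeSet ∧ e ∉ (F false).edgeSet}

/-- the graph of free edges -/
def FreeG (G : SimpleGraph V) (F0 : Bool → SimpleGraph V) : SimpleGraph V :=
  fromEdgeSet (Free G F0)

/-- the part of `F0 i` inside free-classes -/
def HG (G : SimpleGraph V) (F0 : Bool → SimpleGraph V) (i : Bool) : SimpleGraph V where
  Adj a b := (F0 i).Adj a b ∧ (FreeG G F0).Reachable a b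
  symm := ⟨fun a b h => ⟨h.1.symm, h.2.symm⟩⟩
  loopless := ⟨fun a h => (F0 i).loopless.irrefl a h.1⟩

lemma claimC [Finite V] {G : SimpleGraph V} {F0 : Bool → SimpleGraph V} (hv0 : Valid G F0)
    (hmax : ∀ F, Valid G F → size F ≤ size F0) :
    ∀ n F, ReachN G F0 n F → ∀ u v, s(u,v) ∈ G.edgeSet → s(u,v) ∉ (F true).edgeSet →
      s(u,v) ∉ (F false).edgeSet → ∀ i, (HG G F0 i).Reachable u v := by
  classical
  intro n
  induction n using Nat.strong_induction_on with
  | _ n ih =>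
  intro F hF u v he h1 h2 i
  obtain ⟨hv, hsz⟩ := reach_valid_size hv0 hF
  have hne : u ≠ v := (G.mem_edgeSet.1 he).ne
  have huvi : s(u,v) ∉ (F i).edgeSet := by cases i <;> assumption
  have hnotac : ¬ ((F i) ⊔ edge u v).IsAcyclic := by
    intro hac
    have hvalid' : Valid G (Function.update F i ((F i) ⊔ edge u v)) := by
      constructor
      · intro j
        by_cases hj : j = i
        · subst hj
          rw [Function.update_self]
          exact ⟨sup_le (hv.1 j).1 (edge_le_of_mem he), hac⟩
        · rw [Function.update_of_ne hj]; exact hv.1 j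
      · have hES : ((F i) ⊔ edge u v).edgeSet = insert s(u,v) (F i).edgeSet := by
          rw [edgeSet_sup, edge_edgeSet_of_ne hne, Set.union_singleton]
        cases i
        · rw [Function.update_of_ne (by simp), Function.update_self, Set.disjoint_right, hES]
          intro e hemem
          rcases Set.mem_insert_iff.1 hemem with rfl | hh
          · exact h1
          · exact fun hT => (Set.disjoint_left.1 hv.2) hT hh
        · rw [Function.update_self, Function.update_of_ne (by simp), Set.disjoint_left, hES]
          intro e hemem
          rcases Set.mem_insert_iff.1 hemem with rfl | hh
          · exact h2
          · exact fun hT => (Set.disjoint_left.1 hv.2) hh hT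
    have hsz' : size (Function.update F i ((F i) ⊔ edge u v)) = size F + 1 := by
      have hES : ((F i) ⊔ edge u v).edgeSet.ncard = (F i).edgeSet.ncard + 1 := by
        rw [edgeSet_sup, edge_edgeSet_of_ne hne, Set.union_singleton,
          Set.ncard_insert_of_notMem huvi (Set.toFinite _)]
      cases i
      · simp only [size, Function.update_self, Function.update_of_ne (by simp : true ≠ false)]
        rw [hES]; ring
      · simp only [size, Function.update_self, Function.update_of_ne (by simp : false ≠ true)]
        rw [hES]; ring
    have := hmax _ hvalid'
    rw [hsz', hsz] at this
    omega
  have hr : (F i).Reachable u v := reachable_of_not_acyclic (hv.1 i).2 hne hnotac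
  obtain ⟨w⟩ := hr
  refine reachable_of_walk_pointwise w.toPath.1 (fun a b hadj hm => ?_)
  -- each path edge is free (replaceable), hence HG-reachable
  have habE : s(a,b) ∈ (F i).edgeSet := (F i).mem_edgeSet.2 hadj
  have hacnew := isAcyclic_sup_edge_delete (hv.1 i).2 hne huvi w.toPath hm
  have hstep : Step G F (Function.update F i (((F i) ⊔ edge u v).deleteEdges {s(a,b)})) :=
    Step.mk i he h1 h2 habE hacnew
  have hreach' : ReachN G F0 (n+1) (Function.update F i (((F i) ⊔ edge u v).deleteEdges {s(a,b)})) :=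
    ReachN.succ hF hstep
  have habG : s(a,b) ∈ G.edgeSet := edgeSet_mono (hv.1 i).1 habE
  have hfreeab : s(a,b) ∈ Free G F0 := by
    refine ⟨habG, n+1, _, hreach', ?_, ?_⟩
    · by_cases hit : i = true
      · subst hit
        rw [Function.update_self, edgeSet_newF hne]
        exact fun hmem => hmem.2 rfl
      · have : i = false := by simpa using hit
        subst this
        rw [Function.update_of_ne (by simp)]
        exact fun hT => (Set.disjoint_left.1 hv.2) hT habE
    · by_cases hit : i = false
      · subst hit
        rw [Function.update_self, edgeSet_newF hne]
        exact fun hmem => hmem.2 rfl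
      · have : i = true := by simpa using hit
        subst this
        rw [Function.update_of_ne (by simp)]
        exact fun hT => (Set.disjoint_left.1 hv.2) habE hT
  have hFadj : (FreeG G F0).Adj a b := by
    rw [FreeG, fromEdgeSet_adj]
    exact ⟨hfreeab, hadj.ne⟩
  by_cases hpos : s(a,b) ∈ (F0 i).edgeSet
  · exact Adj.reachable ⟨(F0 i).mem_edgeSet.1 hpos, hFadj.reachable⟩
  · obtain ⟨m, hmn, F'', hre, hf1, hf2, hf3⟩ := mem_of_reach hF i s(a,b) habE hpos
    exact ih m hmn F'' hre a b hf1 hf2 hf3 i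

lemma nonempty_of_ec {G : SimpleGraph V} (h4 : EdgeConnected G 4) : Nonempty V := by
  have h := h4.1
  have h0 : 0 < Nat.card V := by omega
  rcases Nat.card_pos_iff.mp h0 with ⟨hne, _⟩
  exact hne

lemma crossSet_subset_deleted {G : SimpleGraph V} {A : Set (Sym2 V)} :
    crossSet G (G.deleteEdges A) ⊆ A := by
  intro e
  induction e using Sym2.ind with
  | _ a b =>
  intro he
  rcases he with ⟨hG, hnr⟩
  by_contra hA'
  exact hnr (Adj.reachable (by rw [deleteEdges_adj]; exact ⟨hG, hA'⟩))

lemma connected_of_ec {G : SimpleGraph V} (h4 : EdgeConnected G 4) : G.Connected := by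
  have := h4.2 ∅ (Set.empty_subset _) (by simp)
  simpa using this

lemma yVal_le_one [Finite V] {G : SimpleGraph V} (h4 : EdgeConnected G 4) {A : Set (Sym2 V)}
    (hA : A ⊆ G.edgeSet) : yVal G A ≤ 1 := by
  have hne : Nonempty V := nonempty_of_ec h4
  rcases le_or_gt (numComp (G.deleteEdges A)) 1 with hc | hc
  · have h0 : (0:ℤ) ≤ (A.ncard : ℤ) := Int.natCast_nonneg _
    unfold yVal
    omega
  · have h2 : 2 ≤ numComp (G.deleteEdges A) := hc
    have hcs := crossSet_card h4 h2
    have hle : (crossSet G (G.deleteEdges A)).ncard ≤ A.ncard :=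
      Set.ncard_le_ncard crossSet_subset_deleted (Set.toFinite _)
    have : 2 * numComp (G.deleteEdges A) ≤ A.ncard := le_trans hcs hle
    unfold yVal
    omega

theorem yMax_eq_one [Finite V] (G : SimpleGraph V) (h4 : EdgeConnected G 4) : yMax G = 1 := by
  have hne : Nonempty V := nonempty_of_ec h4
  have h1 : yVal G ∅ = 1 := by
    have : numComp (G.deleteEdges (∅ : Set (Sym2 V))) = 1 := by
      rw [deleteEdges_empty]
      exact numComp_eq_one_iff.2 (connected_of_ec h4)
    rw [yVal, this]
    simp
  apply IsGreatest.csSup_eq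
  constructor
  · exact ⟨∅, Set.empty_subset _, h1⟩
  · rintro y ⟨A, hA, rfl⟩
    exact yVal_le_one h4 hA

-- new content
lemma numComp_HG [Finite V] {G : SimpleGraph V} {F0 : Bool → SimpleGraph V} (hv0 : Valid G F0)
    (hmax : ∀ F, Valid G F → size F ≤ size F0) (i : Bool) :
    numComp (HG G F0 i) = numComp (FreeG G F0) := by
  classical
  have h1 : ∀ (x y : V) (p : (HG G F0 i).Walk x y), p.IsPath →
      (FreeG G F0).connectedComponentMk x = (FreeG G F0).connectedComponentMk y := by
    intro x y p _
    exact ConnectedComponent.sound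
      (reachable_of_walk_pointwise p (fun a b h _ => h.2))
  have h2 : ∀ (x y : V) (p : (FreeG G F0).Walk x y), p.IsPath →
      (HG G F0 i).connectedComponentMk x = (HG G F0 i).connectedComponentMk y := by
    intro x y p _
    refine ConnectedComponent.sound (reachable_of_walk_pointwise p (fun a b h _ => ?_))
    rw [FreeG, fromEdgeSet_adj] at h
    obtain ⟨⟨heG, n, F, hre, hn1, hn2⟩, hab⟩ := h
    exact claimC hv0 hmax n F hre a b heG hn1 hn2 i
  refine Nat.card_congr ⟨ConnectedComponent.lift _ h1, ConnectedComponent.lift _ h2, ?_, ?_⟩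
  · refine ConnectedComponent.ind fun x => ?_
    simp [ConnectedComponent.lift_mk]
  · refine ConnectedComponent.ind fun x => ?_
    simp [ConnectedComponent.lift_mk]

theorem exists_two_disjoint_spanning_trees [Finite V] (G : SimpleGraph V)
    (h4 : EdgeConnected G 4) : ∃ T₁ T₂ : SimpleGraph V, T₁ ≤ G ∧ T₂ ≤ G ∧ T₁.IsTree ∧ T₂.IsTree
      ∧ Disjoint T₁.edgeSet T₂.edgeSet := by
  classical
  have hnev : Nonempty V := nonempty_of_ec h4
  set SzSet := {n : ℕ | ∃ F : Bool → SimpleGraph V, Valid G F ∧ size F = n} with hSzSet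
  have h0 : (0:ℕ) ∈ SzSet := by
    refine ⟨fun _ => ⊥, ⟨fun i => ⟨bot_le, isAcyclic_bot⟩, by simp⟩, by simp [size]⟩
  have hbdd : BddAbove SzSet := by
    refine ⟨2 * Nat.card (Sym2 V), ?_⟩
    rintro n ⟨F, hv, rfl⟩
    have hb : ∀ i : Bool, (F i).edgeSet.ncard ≤ Nat.card (Sym2 V) := by
      intro i
      rw [← Set.ncard_univ]
      exact Set.ncard_le_ncard (Set.subset_univ _) Set.finite_univ
    have := hb true
    have := hb false
    rw [size]
    omega
  obtain ⟨F0, hv0, hsz0⟩ := Nat.sSup_mem ⟨0, h0⟩ hbdd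
  have hmax : ∀ F, Valid G F → size F ≤ size F0 := fun F hv =>
    hsz0 ▸ le_csSup hbdd ⟨F, hv, rfl⟩
  have hp1 : 1 ≤ numComp (FreeG G F0) := numComp_pos _
  by_cases hp : 2 ≤ numComp (FreeG G F0)
  · exfalso
    have hS := crossSet_card h4 hp
    set S := crossSet G (FreeG G F0) with hSdef
    have hSsub : S ⊆ (F0 true).edgeSet ∪ (F0 false).edgeSet := by
      intro e
      induction e using Sym2.ind with
      | _ a b =>
      intro he
      obtain ⟨heG, hnr⟩ := mem_crossSet.1 he
      by_contra hcon
      rw [Set.mem_union] at hcon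
      push_neg at hcon
      exact hnr (Adj.reachable ((fromEdgeSet_adj _).2
        ⟨⟨heG, 0, F0, ReachN.zero, hcon.1, hcon.2⟩, (G.mem_edgeSet.1 heG).ne⟩))
    have key : ∀ i : Bool, (S ∩ (F0 i).edgeSet).ncard + 1 ≤ numComp (FreeG G F0) := by
      intro i
      have hsub : S ∩ (F0 i).edgeSet ⊆ (F0 i).edgeSet := Set.inter_subset_right
      have hcnt := numComp_deleteEdges_of_acyclic (hv0.1 i).2 hsub
      have heq : (F0 i).deleteEdges (S ∩ (F0 i).edgeSet) = HG G F0 i := by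
        ext a b
        rw [deleteEdges_adj]
        show (F0 i).Adj a b ∧ s(a,b) ∉ S ∩ (F0 i).edgeSet ↔
          (F0 i).Adj a b ∧ (FreeG G F0).Reachable a b
        constructor
        · rintro ⟨hadj, hnm⟩
          refine ⟨hadj, ?_⟩
          by_contra hnr
          exact hnm ⟨mem_crossSet.2 ⟨edgeSet_mono (hv0.1 i).1 ((F0 i).mem_edgeSet.2 hadj), hnr⟩,
            (F0 i).mem_edgeSet.2 hadj⟩
        · rintro ⟨hadj, hr⟩
          exact ⟨hadj, fun hm => (mem_crossSet.1 hm.1).2 hr⟩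
      rw [heq, numComp_HG hv0 hmax] at hcnt
      have hpos : 1 ≤ numComp (F0 i) := numComp_pos _
      omega
    have hsplit : S.ncard ≤ (S ∩ (F0 true).edgeSet).ncard + (S ∩ (F0 false).edgeSet).ncard := by
      have hSeq : S = (S ∩ (F0 true).edgeSet) ∪ (S ∩ (F0 false).edgeSet) := by
        rw [← Set.inter_union_distrib_left]
        exact (Set.inter_eq_left.2 hSsub).symm
      calc S.ncard = ((S ∩ (F0 true).edgeSet) ∪ (S ∩ (F0 false).edgeSet)).ncard := by
              rw [← hSeq]
        _ ≤ _ := Set.ncard_union_le _ _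
    have k1 := key true
    have k2 := key false
    omega
  · have hpeq : numComp (FreeG G F0) = 1 := by omega
    have htree : ∀ i : Bool, (F0 i).IsTree := by
      intro i
      refine ⟨?_, (hv0.1 i).2⟩
      have : numComp (HG G F0 i) = 1 := by rw [numComp_HG hv0 hmax]; exact hpeq
      have hconn : (HG G F0 i).Connected := numComp_eq_one_iff.1 this
      have hle : HG G F0 i ≤ F0 i := fun a b h => h.1
      exact Connected.mono hle hconn
    exact ⟨F0 true, F0 false, (hv0.1 true).1, (hv0.1 false).1, htree true, htree false, hv0.2⟩



theorem xMin_eq_one [Finite V] (G : SimpleGraph V) (h4 : EdgeConnected G 4) : xMin G = 1 := by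
  have hne : Nonempty V := nonempty_of_ec h4
  obtain ⟨T₁, T₂, hle1, hle2, ht1, ht2, hdisj⟩ := exists_two_disjoint_spanning_trees G h4
  have hmem : 1 ∈ { m : ℕ | ∃ T : SimpleGraph V, T ≤ G ∧ T.IsTree ∧
      numComp (G.deleteEdges T.edgeSet) = m } := by
    refine ⟨T₁, hle1, ht1, ?_⟩
    rw [numComp_eq_one_iff]
    have hsub : T₂ ≤ G.deleteEdges T₁.edgeSet := by
      intro a b hab
      rw [deleteEdges_adj]
      exact ⟨hle2 hab, fun hmem => (Set.disjoint_left.1 hdisj) hmem (T₂.mem_edgeSet.2 hab)⟩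
    exact Connected.mono hsub ht2.isConnected
  apply le_antisymm (Nat.sInf_le hmem)
  have hmem' := Nat.sInf_mem (Set.nonempty_of_mem hmem)
  obtain ⟨T, _, _, hT⟩ := hmem'
  rw [← hT]
  exact numComp_pos _

end TP

/-- If `G` is a 4-edge-connected finite simple graph, then `x_G = 1` and `y_G = 1`. -/
theorem xMin_eq_one_and_yMax_eq_one_of_four_edgeConnected {V : Type*} [Finite V]
    (G : SimpleGraph V) (h : EdgeConnected G 4) :
    xMin G = 1 ∧ yMax G = 1 :=
  ⟨TP.xMin_eq_one G h, TP.yMax_eq_one G h⟩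
end

section
/- Let G be a connected finite simple graph (i.e., 1-edge-connected) and let A be an edge subset of minimum cardinality among those satisfying y_G(A) = y_G, where y_G ≥ 2. Then y_G ≤ c(G − A). -/
open SimpleGraph

lemma walk_aux {V : Type*} {H : SimpleGraph V} (u v : V) {x y : V}
    (p : H.Walk x y) :
    (H.deleteEdges {s(u,v)}).Reachable x y ∨
    (H.deleteEdges {s(u,v)}).Reachable x u ∨
    (H.deleteEdges {s(u,v)}).Reachable x v := by
  induction p with
  | nil => exact Or.inl (Reachable.refl _)
  | @cons a b c h q ih =>
    by_cases he : s(a,b) = s(u,v)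
    · rw [Sym2.eq_iff] at he
      rcases he with ⟨rfl, rfl⟩ | ⟨rfl, rfl⟩
      · exact Or.inr (Or.inl (Reachable.refl _))
      · exact Or.inr (Or.inr (Reachable.refl _))
    · have hab : (H.deleteEdges {s(u,v)}).Adj a b := by
        rw [deleteEdges_adj]
        exact ⟨h, by simpa using he⟩
      rcases ih with h1 | h1 | h1
      · exact Or.inl (hab.reachable.trans h1)
      · exact Or.inr (Or.inl (hab.reachable.trans h1))
      · exact Or.inr (Or.inr (hab.reachable.trans h1))

lemma finite_cc {V : Type*} [Finite V] (H : SimpleGraph V) :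
    Finite H.ConnectedComponent :=
  Finite.of_surjective H.connectedComponentMk
    (fun c => c.ind (fun x => ⟨x, rfl⟩))

lemma numComp_deleteEdge_le {V : Type*} [Finite V] (H : SimpleGraph V) (e : Sym2 V) :
    numComp (H.deleteEdges {e}) ≤ numComp H + 1 := by
  induction e using Sym2.ind with
  | _ u v =>
    classical
    set D := H.deleteEdges {s(u,v)} with hD
    have hle : D ≤ H := deleteEdges_le _
    let hom : D →g H := Hom.ofLE hle
    let g : D.ConnectedComponent → Option H.ConnectedComponent :=
      fun c => if c = D.connectedComponentMk u then none else some (c.map hom)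
    have hg : Function.Injective g := by
      intro c1 c2 hgc
      induction c1 using ConnectedComponent.ind with
      | _ x =>
      induction c2 using ConnectedComponent.ind with
      | _ y =>
      by_cases h1 : D.connectedComponentMk x = D.connectedComponentMk u <;>
        by_cases h2 : D.connectedComponentMk y = D.connectedComponentMk u
      · rw [h1, h2]
      · simp only [g, if_pos h1, if_neg h2, reduceCtorEq] at hgc
      · simp only [g, if_pos h2, if_neg h1, reduceCtorEq] at hgc
      · simp only [g, if_neg h1, if_neg h2, Option.some_inj,
          ConnectedComponent.map_mk] at hgc
        have hxy : H.Reachable x y := ConnectedComponent.exact hgc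
        obtain ⟨p⟩ := hxy
        rcases walk_aux u v p with hr | hr | hr
        · exact ConnectedComponent.sound hr
        · exact absurd (ConnectedComponent.sound hr) h1
        · rcases walk_aux u v p.reverse with hr' | hr' | hr'
          · exact (ConnectedComponent.sound hr'.symm)
          · exact absurd (ConnectedComponent.sound hr') h2
          · exact ConnectedComponent.sound (hr.trans hr'.symm)
    haveI := finite_cc H
    haveI := finite_cc D
    haveI := Fintype.ofFinite H.ConnectedComponent
    calc numComp D ≤ Nat.card (Option H.ConnectedComponent) :=
           Nat.card_le_card_of_injective g hg
      _ = numComp H + 1 := Finite.card_option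

lemma numComp_deleteEdges_le {V : Type*} [Finite V] (G : SimpleGraph V)
    (A : Set (Sym2 V)) : numComp (G.deleteEdges A) ≤ numComp G + A.ncard := by
  have hAfin : A.Finite := Set.toFinite A
  refine Set.Finite.induction_on (motive := fun s _ => numComp (G.deleteEdges s) ≤ numComp G + s.ncard) A hAfin (by simp [deleteEdges_empty]) ?_
  intro e s hes hsfin ih
  have heq : G.deleteEdges (insert e s) = (G.deleteEdges s).deleteEdges {e} := by
    ext a b
    simp only [deleteEdges_adj, Set.mem_insert_iff, Set.mem_singleton_iff]
    tauto
  rw [heq, Set.ncard_insert_of_notMem hes hsfin]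
  have := numComp_deleteEdge_le (G.deleteEdges s) e
  omega

lemma numComp_eq_one {V : Type*} [Finite V] {G : SimpleGraph V}
    (hG : G.Connected) : numComp G = 1 := by
  haveI := finite_cc G
  have hsub : Subsingleton G.ConnectedComponent := ⟨fun c d => by
    induction c using ConnectedComponent.ind with
    | _ x =>
    induction d using ConnectedComponent.ind with
    | _ y =>
    exact ConnectedComponent.sound (hG.preconnected x y)⟩
  have hne : Nonempty G.ConnectedComponent :=
    hG.nonempty.elim fun x => ⟨G.connectedComponentMk x⟩
  exact Nat.card_eq_one_iff_unique.mpr ⟨hsub, hne⟩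


/-- If `G` is connected and `A` is a smallest edge subset with `y_G(A) = y_G ≥ 2`,
then `y_G ≤ c(G - A)`. -/
theorem yMax_le_numComp_of_connected {V : Type*} [Finite V]
    (G : SimpleGraph V) (hG : G.Connected)
    (A : Set (Sym2 V)) (hA : A ⊆ G.edgeSet) (hy : yMax G = yVal G A)
    (hmin : ∀ B ⊆ G.edgeSet, yMax G = yVal G B → A.ncard ≤ B.ncard)
    (h2 : 2 ≤ yMax G) :
    yMax G ≤ (numComp (G.deleteEdges A) : ℤ) := by
  rw [hy, yVal]
  have h1 := numComp_deleteEdges_le G A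
  rw [numComp_eq_one hG] at h1
  have h1' : (numComp (G.deleteEdges A) : ℤ) ≤ 1 + (A.ncard : ℤ) := by exact_mod_cast h1
  linarith
end

section
/- Let G be a 3-edge-connected finite simple graph and let A be an edge subset of minimum cardinality among those satisfying y_G(A) = y_G, where y_G ≥ 2. Then y_G ≤ ⌊c(G − A)/2⌋ − 1. -/
open SimpleGraph

/-- If `G` is 3-edge-connected and `A` is a smallest edge subset with `y_G(A) = y_G ≥ 2`,
then `y_G ≤ ⌊c(G - A)/2⌋ - 1`. -/
theorem yMax_le_of_three_edgeConnected {V : Type*} [Finite V]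
    (G : SimpleGraph V) (hG : EdgeConnected G 3)
    (A : Set (Sym2 V)) (hA : A ⊆ G.edgeSet) (hy : yMax G = yVal G A)
    (hmin : ∀ B ⊆ G.edgeSet, yMax G = yVal G B → A.ncard ≤ B.ncard)
    (h2 : 2 ≤ yMax G) :
    yMax G ≤ ((numComp (G.deleteEdges A) / 2 : ℕ) : ℤ) - 1 := by
  classical
  haveI : Fintype V := Fintype.ofFinite V
  set H := G.deleteEdges A with hH
  haveI : Fintype H.ConnectedComponent := Fintype.ofFinite _
  have hcard : numComp H = Fintype.card H.ConnectedComponent := Nat.card_eq_fintype_card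
  set c := numComp H with hc
  set n := A.ncard with hn
  -- from the hypothesis, 2 ≤ 2c - n - 1, hence c ≥ 2
  have hyA : (2 : ℤ) ≤ 2 * (c : ℤ) - (n : ℤ) - 1 := by
    rw [hy] at h2; exact h2
  have hc2 : 2 ≤ c := by omega
  -- the cut of a component
  set cut : H.ConnectedComponent → Finset (Sym2 V) := fun K =>
    Finset.univ.filter (fun e => e ∈ A ∧ ∃ u v, e = s(u, v) ∧
      H.connectedComponentMk u = K ∧ H.connectedComponentMk v ≠ K) with hcut_def
  -- each cut has at least 3 edges, by 3-edge-connectivity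
  have hcut3 : ∀ K, 3 ≤ (cut K).card := by
    intro K
    by_contra hlt
    push_neg at hlt
    set B : Set (Sym2 V) := ↑(cut K) with hB
    have hBsub : B ⊆ G.edgeSet := by
      intro e he
      simp only [hB, Finset.coe_filter, Set.mem_setOf_eq, hcut_def] at he
      exact hA he.2.1
    have hconn : (G.deleteEdges B).Connected := by
      apply hG.2 B hBsub
      rw [hB, Set.ncard_coe_finset]
      omega
    obtain ⟨u, hu⟩ := Quot.exists_rep K
    obtain ⟨K', hK'⟩ := Fintype.exists_ne_of_one_lt_card (by omega) K
    obtain ⟨w, hw⟩ := Quot.exists_rep K'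
    have hreach := (hconn.preconnected u w)
    obtain ⟨p⟩ := hreach
    have huS : u ∈ {v | H.connectedComponentMk v = K} := hu
    have hwS : w ∉ {v | H.connectedComponentMk v = K} := by
      intro hmem
      exact hK' (by rw [← hw, ← hmem]; rfl)
    obtain ⟨d, _hd, hdS, hdS'⟩ := p.exists_boundary_dart _ huS hwS
    have hadj : (G.deleteEdges B).Adj d.fst d.snd := d.adj
    rw [SimpleGraph.deleteEdges_adj] at hadj
    by_cases hmemA : s(d.fst, d.snd) ∈ A
    · apply hadj.2
      simp only [hB, Finset.mem_coe, hcut_def, Finset.mem_filter, Finset.mem_univ, true_and]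
      exact ⟨hmemA, d.fst, d.snd, rfl, hdS, hdS'⟩
    · have : H.Adj d.fst d.snd := by
        rw [hH, SimpleGraph.deleteEdges_adj]
        exact ⟨hadj.1, hmemA⟩
      exact hdS' (show H.connectedComponentMk d.toProd.2 = K from
        (SimpleGraph.ConnectedComponent.connectedComponentMk_eq_of_adj this).symm.trans hdS)
  -- double counting
  set P : Finset (H.ConnectedComponent × Sym2 V) :=
    Finset.univ.filter (fun p => p.2 ∈ cut p.1) with hP_def
  -- lower bound : 3 * c ≤ P.card
  have hlow : 3 * c ≤ P.card := by
    have hsum : P.card = ∑ K : H.ConnectedComponent,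
        (P.filter (fun p => p.1 = K)).card :=
      Finset.card_eq_sum_card_fiberwise (fun p _ => Finset.mem_univ p.1)
    have hfib : ∀ K, 3 ≤ (P.filter (fun p => p.1 = K)).card := by
      intro K
      refine le_trans (hcut3 K) (Finset.card_le_card_of_injOn (fun e => (K, e)) ?_ ?_)
      · intro e he
        simp [hP_def, Finset.mem_coe.mp he]
      · intro a _ b _ hab
        exact (Prod.mk.injEq _ _ _ _).mp hab |>.2
    calc 3 * c = ∑ _K : H.ConnectedComponent, 3 := by
          rw [Finset.sum_const, Finset.card_univ, ← hcard, smul_eq_mul, mul_comm]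
      _ ≤ _ := Finset.sum_le_sum (fun K _ => hfib K)
      _ = P.card := hsum.symm
  -- upper bound : P.card ≤ 2 * n
  have hup : P.card ≤ 2 * n := by
    have hmaps : ∀ p ∈ P, p.2 ∈ A.toFinset := by
      intro p hp
      simp only [hP_def, Finset.mem_filter, hcut_def, Finset.mem_univ, true_and] at hp
      rw [Set.mem_toFinset]
      exact hp.1
    have hsum : P.card = ∑ e ∈ A.toFinset, (P.filter (fun p => p.2 = e)).card :=
      Finset.card_eq_sum_card_fiberwise hmaps
    have hfib : ∀ e ∈ A.toFinset, (P.filter (fun p => p.2 = e)).card ≤ 2 := by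
      intro e _
      induction e using Sym2.ind with
      | _ a b =>
        refine le_trans (Finset.card_le_card (t :=
            {(H.connectedComponentMk a, s(a, b)), (H.connectedComponentMk b, s(a, b))}) ?_)
          (le_trans (Finset.card_insert_le _ _) (by simp))
        intro p hp
        simp only [Finset.mem_filter, hP_def, hcut_def, Finset.mem_univ, true_and] at hp
        obtain ⟨⟨_, u, v, huv, hKu, _⟩, hpe⟩ := hp
        rw [hpe] at huv
        rw [Sym2.eq_iff] at huv
        simp only [Finset.mem_insert, Finset.mem_singleton, Prod.ext_iff]
        rcases huv with ⟨rfl, rfl⟩ | ⟨rfl, rfl⟩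
        · exact Or.inl ⟨hKu.symm, hpe⟩
        · exact Or.inr ⟨hKu.symm, hpe⟩
    calc P.card = ∑ e ∈ A.toFinset, (P.filter (fun p => p.2 = e)).card := hsum
      _ ≤ ∑ _e ∈ A.toFinset, 2 := Finset.sum_le_sum hfib
      _ = 2 * n := by
          rw [Finset.sum_const, smul_eq_mul, mul_comm, hn, Set.ncard_eq_toFinset_card']
  have key : 3 * c ≤ 2 * n := le_trans hlow hup
  rw [hy]
  show 2 * (c : ℤ) - (n : ℤ) - 1 ≤ ((c / 2 : ℕ) : ℤ) - 1
  omega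
end

section
/- If G is a 2-edge-connected finite simple graph of order n that is not a complete graph, then y_G ≤ min{n − 1, 3·χ(G^c) − 1}, where G^c is the complement of G and χ denotes the chromatic number. -/
open SimpleGraph

section Helpers

open Finset

lemma auxNat (t : ℕ) : 4 * t ≤ t * t - t + 6 := by
  rcases Nat.lt_or_ge t 6 with h | h
  · interval_cases t <;> decide
  · have h2 : 5 * t ≤ t * t := Nat.mul_le_mul_right t (by omega)
    omega

lemma crossing_mem {V : Type*} (G : SimpleGraph V) (A : Set (Sym2 V)) {u v : V}
    (hadj : G.Adj u v)
    (hne : (G.deleteEdges A).connectedComponentMk u ≠ (G.deleteEdges A).connectedComponentMk v) :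
    s(u, v) ∈ A := by
  by_contra hmem
  exact hne (ConnectedComponent.sound (SimpleGraph.Adj.reachable (by
    rw [deleteEdges_adj]; exact ⟨hadj, hmem⟩)))

lemma lemB {V : Type*} [Finite V] (G : SimpleGraph V) (hG : EdgeConnected G 2)
    (A : Set (Sym2 V)) (hA : A ⊆ G.edgeSet) :
    2 * numComp (G.deleteEdges A) ≤ Nat.card V + A.ncard := by
  classical
  letI : Fintype V := Fintype.ofFinite V
  set H := G.deleteEdges A with hH
  letI : Fintype H.ConnectedComponent := Fintype.ofFinite _
  set q : V → H.ConnectedComponent := H.connectedComponentMk with hq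
  have hcard : numComp H = Fintype.card H.ConnectedComponent := Nat.card_eq_fintype_card
  have hqsurj : Function.Surjective q := fun d => d.exists_rep
  have hcn : Fintype.card H.ConnectedComponent ≤ Fintype.card V :=
    Fintype.card_le_of_surjective q hqsurj
  have hnV : Nat.card V = Fintype.card V := Nat.card_eq_fintype_card
  rcases Nat.lt_or_ge (Fintype.card H.ConnectedComponent) 2 with h1 | h1
  · -- few components
    have h2 : 2 ≤ Nat.card V := hG.1
    rw [hcard]; omega
  · -- c ≥ 2 : show c ≤ A.ncard
    set AF : Finset (Sym2 V) := (Set.toFinite A).toFinset with hAF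
    have hAFmem : ∀ e, e ∈ AF ↔ e ∈ A := fun e => Set.Finite.mem_toFinset _
    have hAFcard : A.ncard = AF.card := Set.ncard_eq_toFinset_card _ _
    set B : H.ConnectedComponent → Finset (Sym2 V) :=
      fun d => G.edgeFinset.filter
        (fun e => ∃ u v, e = s(u, v) ∧ q u = d ∧ q v ≠ d) with hB
    -- each boundary is contained in A
    have hBsub : ∀ d, B d ⊆ AF := by
      intro d e he
      rw [mem_filter] at he
      obtain ⟨u, v, rfl, hu, hv⟩ := he.2
      rw [hAFmem]
      have hadj : G.Adj u v := G.mem_edgeSet.mp (mem_edgeFinset.mp he.1)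
      exact crossing_mem G A hadj
        (fun h => hv (by have h' : q u = q v := h; rw [← h']; exact hu))
    -- each boundary has at least 2 edges
    have hB2 : ∀ d, 2 ≤ (B d).card := by
      intro d
      by_contra hlt
      push_neg at hlt
      have hsubE : (↑(B d) : Set (Sym2 V)) ⊆ G.edgeSet := by
        intro e he
        rw [Finset.mem_coe, mem_filter] at he
        exact mem_edgeFinset.mp he.1
      have hconn := hG.2 (↑(B d)) hsubE (by rw [Set.ncard_coe_finset]; omega)
      obtain ⟨u, hu⟩ := hqsurj d
      obtain ⟨d', hd'⟩ := Fintype.exists_ne_of_one_lt_card h1 d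
      obtain ⟨w, hw⟩ := hqsurj d'
      have hreach := hconn u w
      have hstay : ∀ x y : V, (G.deleteEdges ↑(B d)).Reachable x y → q x = d → q y = d := by
        intro x y hr
        obtain ⟨p⟩ := hr
        induction p with
        | nil => exact id
        | cons hadj p ih =>
          intro hx
          apply ih
          rw [deleteEdges_adj] at hadj
          by_contra hb
          apply hadj.2
          rw [Finset.mem_coe, mem_filter]
          exact ⟨mem_edgeFinset.mpr hadj.1, _, _, rfl, hx, hb⟩
      have := hstay u w hreach hu
      rw [hw] at this
      exact hd' this
    -- double count
    set Sg := (univ : Finset H.ConnectedComponent).sigma B with hSg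
    have hSgcard : Sg.card = ∑ d, (B d).card := Finset.card_sigma _ _
    have hlow : 2 * Fintype.card H.ConnectedComponent ≤ Sg.card := by
      rw [hSgcard]
      calc 2 * Fintype.card H.ConnectedComponent
          = ∑ _d : H.ConnectedComponent, 2 := by
            rw [Finset.sum_const, Finset.card_univ]; ring
        _ ≤ ∑ d, (B d).card := Finset.sum_le_sum (fun d _ => hB2 d)
    have hup : Sg.card ≤ 2 * AF.card := by
      apply Finset.card_le_mul_card_image_of_maps_to (f := fun x => x.2) (t := AF)
      · intro x hx
        rw [Finset.mem_sigma] at hx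
        exact hBsub x.1 hx.2
      · intro e he
        induction e using Sym2.ind with
        | _ u v =>
          have hb : ({q u, q v} : Finset H.ConnectedComponent).card ≤ 2 :=
            (Finset.card_insert_le _ _).trans (by simp)
          refine le_trans (Finset.card_le_card_of_injOn (fun x => x.1) ?_ ?_) hb
          · intro x hx
            rw [Finset.mem_coe, Finset.mem_filter, Finset.mem_sigma] at hx
            obtain ⟨⟨_, hx2⟩, hxe⟩ := hx
            rw [mem_filter] at hx2
            obtain ⟨a, b, hab, ha, hb'⟩ := hx2.2
            rw [hxe, Sym2.eq_iff] at hab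
            rcases hab with ⟨rfl, rfl⟩ | ⟨rfl, rfl⟩
            · simp [← ha]
            · simp [← ha]
          · intro x hx y hy hxy
            rw [Finset.mem_coe, Finset.mem_filter] at hx hy
            exact Sigma.ext hxy (heq_of_eq (hx.2.trans hy.2.symm))
    rw [hcard, hAFcard]
    omega

lemma lemA {V : Type*} [Finite V] [Nonempty V] (G : SimpleGraph V)
    (A : Set (Sym2 V)) (hA : A ⊆ G.edgeSet)
    (χ : ℕ) (C : (Gᶜ).Coloring (Fin χ)) :
    2 * numComp (G.deleteEdges A) ≤ 3 * χ + A.ncard := by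
  classical
  letI : Fintype V := Fintype.ofFinite V
  set H := G.deleteEdges A with hH
  letI : Fintype H.ConnectedComponent := Fintype.ofFinite _
  set q : V → H.ConnectedComponent := H.connectedComponentMk with hq
  have hcard : numComp H = Fintype.card H.ConnectedComponent := Nat.card_eq_fintype_card
  have hqsurj : Function.Surjective q := fun d => d.exists_rep
  set AF : Finset (Sym2 V) := (Set.toFinite A).toFinset with hAF
  have hAFmem : ∀ e, e ∈ AF ↔ e ∈ A := fun e => Set.Finite.mem_toFinset _
  have hAFcard : A.ncard = AF.card := Set.ncard_eq_toFinset_card _ _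
  set T : Fin χ → Finset H.ConnectedComponent :=
    fun i => univ.filter (fun d => ∃ v, C v = i ∧ q v = d) with hT
  set rep : Fin χ → H.ConnectedComponent → V :=
    fun i d => if h : ∃ v, C v = i ∧ q v = d then h.choose else Classical.arbitrary V with hrep
  have hrepSpec : ∀ i d, d ∈ T i → C (rep i d) = i ∧ q (rep i d) = d := by
    intro i d hd
    have hd' : ∃ v, C v = i ∧ q v = d := (mem_filter.mp hd).2
    simp only [hrep, dif_pos hd']
    exact hd'.choose_spec
  -- coverage
  have hTcover : ∀ d, ∃ i, d ∈ T i := by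
    intro d
    obtain ⟨v, hv⟩ := hqsurj d
    exact ⟨C v, mem_filter.mpr ⟨mem_univ _, v, rfl, hv⟩⟩
  have hsum : Fintype.card H.ConnectedComponent ≤ ∑ i, (T i).card := by
    have hsub : (univ : Finset H.ConnectedComponent) ⊆ univ.biUnion T := by
      intro d _
      obtain ⟨i, hi⟩ := hTcover d
      exact mem_biUnion.mpr ⟨i, mem_univ _, hi⟩
    calc Fintype.card H.ConnectedComponent = (univ : Finset H.ConnectedComponent).card :=
          (Finset.card_univ).symm
      _ ≤ (univ.biUnion T).card := Finset.card_le_card hsub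
      _ ≤ ∑ i, (T i).card := Finset.card_biUnion_le
  -- double count
  set Sg := (univ : Finset (Fin χ)).sigma (fun i => (T i).offDiag) with hSg
  have hSgcard : Sg.card = ∑ i, (T i).offDiag.card := Finset.card_sigma _ _
  set f : ((_ : Fin χ) × (H.ConnectedComponent × H.ConnectedComponent)) → Sym2 V :=
    fun x => s(rep x.1 x.2.1, rep x.1 x.2.2) with hf
  have hmemSg : ∀ x, x ∈ Sg → x.2.1 ∈ T x.1 ∧ x.2.2 ∈ T x.1 ∧ x.2.1 ≠ x.2.2 := by
    intro x hx
    rw [Finset.mem_sigma] at hx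
    exact Finset.mem_offDiag.mp hx.2
  have hup : Sg.card ≤ 2 * AF.card := by
    apply Finset.card_le_mul_card_image_of_maps_to (f := f) (t := AF)
    · intro x hx
      obtain ⟨h1, h2, h3⟩ := hmemSg x hx
      obtain ⟨hc1, hq1⟩ := hrepSpec _ _ h1
      obtain ⟨hc2, hq2⟩ := hrepSpec _ _ h2
      have hqne : q (rep x.1 x.2.1) ≠ q (rep x.1 x.2.2) := by
        rw [hq1, hq2]; exact h3
      have hne : rep x.1 x.2.1 ≠ rep x.1 x.2.2 := fun h => hqne (by rw [h])
      have hadj : G.Adj (rep x.1 x.2.1) (rep x.1 x.2.2) := by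
        by_contra hna
        exact C.valid ((G.compl_adj _ _).mpr ⟨hne, hna⟩) (by rw [hc1, hc2])
      exact (hAFmem _).mpr (crossing_mem G A hadj hqne)
    · intro e he
      induction e using Sym2.ind with
      | _ u v =>
        have hb : ({(q u, q v), (q v, q u)} :
            Finset (H.ConnectedComponent × H.ConnectedComponent)).card ≤ 2 :=
          (Finset.card_insert_le _ _).trans (by simp)
        refine le_trans (Finset.card_le_card_of_injOn (fun x => x.2) ?_ ?_) hb
        · intro x hx
          rw [Finset.mem_coe, Finset.mem_filter] at hx
          obtain ⟨h1, h2, h3⟩ := hmemSg x hx.1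
          obtain ⟨hc1, hq1⟩ := hrepSpec _ _ h1
          obtain ⟨hc2, hq2⟩ := hrepSpec _ _ h2
          have hee : s(rep x.1 x.2.1, rep x.1 x.2.2) = s(u, v) := hx.2
          rw [Sym2.eq_iff] at hee
          have hx2 : x.2 = (q (rep x.1 x.2.1), q (rep x.1 x.2.2)) := by
            rw [hq1, hq2]
          rcases hee with ⟨h4, h5⟩ | ⟨h4, h5⟩
          · rw [h4, h5] at hx2
            simp [hx2]
          · rw [h4, h5] at hx2
            simp [hx2]
        · intro x hx y hy hxy
          simp only [Finset.mem_coe, Finset.mem_filter] at hx hy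
          have hCu : ∀ z, z ∈ Sg → f z = s(u, v) → z.1 = C u := by
            intro z hz hze
            obtain ⟨h1, h2, h3⟩ := hmemSg z hz
            obtain ⟨hc1, hq1⟩ := hrepSpec _ _ h1
            obtain ⟨hc2, hq2⟩ := hrepSpec _ _ h2
            have hee : s(rep z.1 z.2.1, rep z.1 z.2.2) = s(u, v) := hze
            rw [Sym2.eq_iff] at hee
            rcases hee with ⟨h4, _⟩ | ⟨_, h5⟩
            · rw [← h4, hc1]
            · rw [← h5, hc2]
          have h1 := hCu x hx.1 hx.2
          have h2 := hCu y hy.1 hy.2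
          exact Sigma.ext (h1.trans h2.symm) (heq_of_eq hxy)
  -- arithmetic
  have h4 : ∀ i : Fin χ, 4 * (T i).card ≤ (T i).offDiag.card + 6 := by
    intro i
    rw [Finset.offDiag_card]
    exact auxNat _
  have hmain : 4 * Fintype.card H.ConnectedComponent ≤ 2 * AF.card + 6 * χ := by
    calc 4 * Fintype.card H.ConnectedComponent ≤ 4 * ∑ i, (T i).card :=
          Nat.mul_le_mul_left 4 hsum
      _ = ∑ i, 4 * (T i).card := Finset.mul_sum _ _ _
      _ ≤ ∑ i, ((T i).offDiag.card + 6) := Finset.sum_le_sum (fun i _ => h4 i)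
      _ = Sg.card + 6 * χ := by
          rw [Finset.sum_add_distrib, hSgcard, Finset.sum_const, Finset.card_univ,
            Fintype.card_fin, smul_eq_mul, mul_comm]
      _ ≤ 2 * AF.card + 6 * χ := by omega
  rw [hcard, hAFcard]
  omega


end Helpers

/-- If `G` is a 2-edge-connected finite simple graph of order `n` that is not complete,
then `y_G ≤ min {n - 1, 3 χ(Gᶜ) - 1}`. -/
theorem yMax_le_of_two_edgeConnected_not_complete {V : Type*} [Finite V]
    (G : SimpleGraph V) (hG : EdgeConnected G 2) (hnc : G ≠ ⊤)
    (n : ℕ) (hn : Nat.card V = n) :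
    yMax G ≤ (n : ℤ) - 1 ∧ yMax G ≤ 3 * ((Gᶜ).chromaticNumber.toNat : ℤ) - 1 := by
  have hnV : Nonempty V := by
    have h0 : 0 < Nat.card V := lt_trans one_pos hG.1
    exact (Nat.card_pos_iff.mp h0).1
  obtain ⟨C⟩ := (Gᶜ).colorable_chromaticNumber_of_fintype
  have hSne : { y : ℤ | ∃ A ⊆ G.edgeSet, yVal G A = y }.Nonempty :=
    ⟨yVal G ∅, ∅, Set.empty_subset _, rfl⟩
  constructor
  · apply csSup_le hSne
    rintro y ⟨A, hA, rfl⟩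
    have h := lemB G hG A hA
    rw [hn] at h
    unfold yVal
    omega
  · apply csSup_le hSne
    rintro y ⟨A, hA, rfl⟩
    have h := lemA G A hA _ C
    unfold yVal
    omega
end
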